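/- arXiv:1309.2340 — 5 statements merged into one kernel-verified Lean document; each statement's English description precedes it below -/
import Mathlib

section
/- The map sending h ∈ QP to the function f: T_n^d → {0,1,2} defined by f(π(v)) = h(v) mod 3 (which is well defined) is a bijection from QP onto col(T_n^d), the set of proper 3-colorings of T_n^d taking the value 0 at the vertex 0. -/
namespace P3C

def latticeGraph (d : ℕ) : SimpleGraph (Fin d → ℤ) where
  Adj v w := ∃ i, (w i = v i + 1 ∨ w i = v i - 1) ∧ ∀ j, j ≠ i → w j = v j
  symm := ⟨by
    rintro v w ⟨i, h1, h2⟩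
    exact ⟨i, by omega, fun j hj => (h2 j hj).symm⟩⟩
  loopless := ⟨by
    rintro v ⟨i, h1, _⟩
    omega⟩

def vplus (d : ℕ) (U : Set (Fin d → ℤ)) : Set (Fin d → ℤ) :=
  {u | u ∈ U ∨ ∃ w ∈ U, (latticeGraph d).Adj u w}

def vminus (d : ℕ) (U : Set (Fin d → ℤ)) : Set (Fin d → ℤ) :=
  {u | u ∈ U ∧ ∀ w, (latticeGraph d).Adj u w → w ∈ U}

def inBdry (d : ℕ) (U : Set (Fin d → ℤ)) : Set (Fin d → ℤ) := U \ vminus d U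

def outBdry (d : ℕ) (U : Set (Fin d → ℤ)) : Set (Fin d → ℤ) := vplus d U \ U

def ConnectedIn {V : Type*} (G : SimpleGraph V) (S : Set V) : Prop := (G.induce S).Connected

def BiConnected (d : ℕ) (U : Set (Fin d → ℤ)) : Prop :=
  U ≠ ∅ ∧ U ≠ Set.univ ∧ ConnectedIn (latticeGraph d) U ∧ ConnectedIn (latticeGraph d) Uᶜ

def edgeBdry (d : ℕ) (U : Set (Fin d → ℤ)) : Set ((Fin d → ℤ) × (Fin d → ℤ)) :=
  {p | (latticeGraph d).Adj p.1 p.2 ∧ ((p.1 ∈ U ∧ p.2 ∉ U) ∨ (p.2 ∈ U ∧ p.1 ∉ U))}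

def IsFourCycle (d : ℕ) (v00 v01 v11 v10 : Fin d → ℤ) : Prop :=
  (latticeGraph d).Adj v00 v01 ∧ (latticeGraph d).Adj v01 v11 ∧
  (latticeGraph d).Adj v11 v10 ∧ (latticeGraph d).Adj v10 v00 ∧ v00 ≠ v11 ∧ v01 ≠ v10

def BoundaryDisjoint (d : ℕ) (U1 U2 : Set (Fin d → ℤ)) : Prop :=
  edgeBdry d U1 ∩ edgeBdry d U2 = ∅ ∧
  ¬ ∃ v00 v01 v11 v10, IsFourCycle d v00 v01 v11 v10 ∧
    v00 ∈ U1ᶜ ∩ U2ᶜ ∧ v01 ∈ U1ᶜ ∩ U2 ∧ v11 ∈ U1 ∩ U2 ∧ v10 ∈ U1 ∩ U2ᶜ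

def translates (n d : ℕ) (U : Set (Fin d → ℤ)) : Set (Set (Fin d → ℤ)) :=
  {W | ∃ x : Fin d → ℤ, (∀ i, (n : ℤ) ∣ x i) ∧ W = (fun u => u + x) '' U}

def TranslationRespecting (n d : ℕ) (U : Set (Fin d → ℤ)) : Prop :=
  BiConnected d U ∧
  ∀ U1 ∈ translates n d U, ∀ U2 ∈ translates n d U, U1 ≠ U2 → BoundaryDisjoint d U1 U2

def TypeZero (n d : ℕ) (U : Set (Fin d → ℤ)) : Prop :=
  TranslationRespecting n d U ∧ (translates n d U).Nontrivial ∧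
  ∀ A ∈ translates n d U, ∀ B ∈ translates n d U, A ⊆ B ∨ B ⊆ A

noncomputable def setDist (d : ℕ) (A B : Set (Fin d → ℤ)) : ℕ :=
  sInf {k | ∃ a ∈ A, ∃ b ∈ B, (latticeGraph d).dist a b = k}

def IsLatticeHHF (d : ℕ) (h : (Fin d → ℤ) → ℤ) : Prop :=
  ∀ v w, (latticeGraph d).Adj v w → |h v - h w| = 1

def homZeroLattice (d : ℕ) : Set ((Fin d → ℤ) → ℤ) :=
  {h | IsLatticeHHF d h ∧ h 0 = 0}

def IsQP (n d : ℕ) (m : Fin d → ℤ) (h : (Fin d → ℤ) → ℤ) : Prop :=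
  h ∈ homZeroLattice d ∧ ∀ (v : Fin d → ℤ) (i : Fin d), h (v + Pi.single i (n : ℤ)) = h v + m i

def QPset (n d : ℕ) : Set ((Fin d → ℤ) → ℤ) :=
  {h | ∃ m : Fin d → ℤ, (∀ i, (6 : ℤ) ∣ m i ∧ |m i| ≤ (n : ℤ)) ∧ IsQP n d m h}

def compIn {V : Type*} (G : SimpleGraph V) (S : Set V) (u : V) : Set V :=
  {w | ∃ (hu : u ∈ S) (hw : w ∈ S), (G.induce S).Reachable ⟨u, hu⟩ ⟨w, hw⟩}

def subLL (d : ℕ) (h : (Fin d → ℤ) → ℤ) (k : ℤ) (u : Fin d → ℤ) : Set (Fin d → ℤ) :=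
  compIn (latticeGraph d) {w | h w ≠ k + 1} u

def subLC (d : ℕ) (h : (Fin d → ℤ) → ℤ) (k : ℤ) (u v : Fin d → ℤ) : Set (Fin d → ℤ) :=
  (compIn (latticeGraph d) (subLL d h k u)ᶜ v)ᶜ

def IsSublevelComponent (d : ℕ) (h : (Fin d → ℤ) → ℤ) (A : Set (Fin d → ℤ)) : Prop :=
  ∃ u v k, h u ≤ k ∧ k < h v ∧ A = subLC d h k u v

def sepComps (d : ℕ) (h : (Fin d → ℤ) → ℤ) (u v : Fin d → ℤ) : Set (Set (Fin d → ℤ)) :=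
  {A | IsSublevelComponent d h A ∧ u ∈ A ∧ v ∉ A}

def cycleEdge (d : ℕ) (v00 v01 v11 v10 : Fin d → ℤ) (e : (Fin d → ℤ) × (Fin d → ℤ)) : Prop :=
  ({e.1, e.2} : Set (Fin d → ℤ)) = {v00, v01} ∨ ({e.1, e.2} : Set (Fin d → ℤ)) = {v01, v11} ∨
  ({e.1, e.2} : Set (Fin d → ℤ)) = {v11, v10} ∨ ({e.1, e.2} : Set (Fin d → ℤ)) = {v10, v00}

def bdryGraph (d : ℕ) (U : Set (Fin d → ℤ)) : SimpleGraph (Fin d → ℤ) where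
  Adj u v := u ≠ v ∧ ∃ eu ev, eu ∈ edgeBdry d U ∧ ev ∈ edgeBdry d U ∧
    (u = eu.1 ∨ u = eu.2) ∧ (v = ev.1 ∨ v = ev.2) ∧
    ∃ a b c e, IsFourCycle d a b c e ∧ cycleEdge d a b c e eu ∧ cycleEdge d a b c e ev
  symm := ⟨by
    rintro u v ⟨hne, eu, ev, h1, h2, h3, h4, a, b, c, e, hc, hcu, hcv⟩
    exact ⟨hne.symm, ev, eu, h2, h1, h4, h3, a, b, c, e, hc, hcv, hcu⟩⟩
  loopless := ⟨fun u h => h.1 rfl⟩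

/-! Torus definitions -/

def torusAdj (n d : ℕ) (v w : Fin d → ZMod n) : Prop :=
  ∃ i, (w i = v i + 1 ∨ w i = v i - 1) ∧ ∀ j, j ≠ i → w j = v j

def IsProperColoring (n d : ℕ) (f : (Fin d → ZMod n) → Fin 3) : Prop :=
  ∀ v w, torusAdj n d v w → f v ≠ f w

def torusColorings (n d : ℕ) : Set ((Fin d → ZMod n) → Fin 3) :=
  {f | IsProperColoring n d f}

def colZero (n d : ℕ) : Set ((Fin d → ZMod n) → Fin 3) :=
  {f | IsProperColoring n d f ∧ f 0 = 0}

def IsTorusHHF (n d : ℕ) (h : (Fin d → ZMod n) → ℤ) : Prop :=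
  ∀ v w, torusAdj n d v w → |h v - h w| = 1

def torusHomZero (n d : ℕ) : Set ((Fin d → ZMod n) → ℤ) :=
  {h | IsTorusHHF n d h ∧ h 0 = 0}

noncomputable def cp (n d : ℕ) (par : ℕ) (k : Fin 3) (f : (Fin d → ZMod n) → Fin 3) : ℝ :=
  (Nat.card {v : Fin d → ZMod n | (∑ j, (v j).val) % 2 = par ∧ f v = k} : ℝ) /
  (Nat.card {v : Fin d → ZMod n | (∑ j, (v j).val) % 2 = par} : ℝ)

def latticeProj (n d : ℕ) (v : Fin d → ℤ) : Fin d → ZMod n := fun i => (v i : ZMod n)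

def toCol (n d : ℕ) (h : (Fin d → ℤ) → ℤ) (x : Fin d → ZMod n) : Fin 3 :=
  ⟨(h (fun i => ((x i).val : ℤ)) % 3).toNat, by
    have h1 : (0 : ℤ) ≤ h (fun i => ((x i).val : ℤ)) % 3 := Int.emod_nonneg _ (by norm_num)
    have h2 : h (fun i => ((x i).val : ℤ)) % 3 < 3 := Int.emod_lt_of_pos _ (by norm_num)
    omega⟩

end P3C
open Finset in
lemma const_of_step {d : ℕ} {α : Sort*} (g : (Fin d → ℤ) → α)
    (hg : ∀ v i, g (v + Pi.single i 1) = g v) : ∀ v, g v = g 0 := by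
  suffices H : ∀ N : ℕ, ∀ v : Fin d → ℤ, (∑ i, (v i).natAbs) = N → g v = g 0 by
    exact fun v => H _ v rfl
  intro N
  induction N using Nat.strong_induction_on with
  | _ N ih =>
    intro v hv
    by_cases h0 : ∀ i, v i = 0
    · have : v = 0 := funext h0
      rw [this]
    · push_neg at h0
      obtain ⟨i, hi⟩ := h0
      rcases lt_or_gt_of_ne hi with hneg | hpos
      · -- v i < 0, w := v + e_i
        set w := v + Pi.single i 1 with hw
        have hgv : g w = g v := hg v i
        have hsum : ∑ j, (w j).natAbs < N := by
          rw [← hv]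
          have h1 : ∑ j, (v j).natAbs
              = (v i).natAbs + ∑ j ∈ Finset.univ.erase i, (v j).natAbs :=
            (Finset.add_sum_erase _ _ (Finset.mem_univ i)).symm
          have h2 : ∑ j, (w j).natAbs
              = (w i).natAbs + ∑ j ∈ Finset.univ.erase i, (w j).natAbs :=
            (Finset.add_sum_erase _ _ (Finset.mem_univ i)).symm
          have h3 : ∑ j ∈ Finset.univ.erase i, (w j).natAbs
              = ∑ j ∈ Finset.univ.erase i, (v j).natAbs := by
            apply Finset.sum_congr rfl
            intro j hj
            have : w j = v j := by
              simp [hw, Pi.single_eq_of_ne (Finset.ne_of_mem_erase hj)]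
            rw [this]
          have h4 : w i = v i + 1 := by simp [hw]
          omega
        rw [← hgv]
        exact ih _ hsum w rfl
      · -- v i > 0, w := v - e_i
        set w := v + Pi.single i (-1) with hw
        have hv' : v = w + Pi.single i 1 := by
          funext j
          by_cases hj : j = i
          · subst hj; simp [hw]
          · simp [hw, Pi.single_eq_of_ne hj]
        have hgv : g v = g w := by rw [hv']; exact hg w i
        have hsum : ∑ j, (w j).natAbs < N := by
          rw [← hv]
          have h1 : ∑ j, (v j).natAbs
              = (v i).natAbs + ∑ j ∈ Finset.univ.erase i, (v j).natAbs :=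
            (Finset.add_sum_erase _ _ (Finset.mem_univ i)).symm
          have h2 : ∑ j, (w j).natAbs
              = (w i).natAbs + ∑ j ∈ Finset.univ.erase i, (w j).natAbs :=
            (Finset.add_sum_erase _ _ (Finset.mem_univ i)).symm
          have h3 : ∑ j ∈ Finset.univ.erase i, (w j).natAbs
              = ∑ j ∈ Finset.univ.erase i, (v j).natAbs := by
            apply Finset.sum_congr rfl
            intro j hj
            have : w j = v j := by
              simp [hw, Pi.single_eq_of_ne (Finset.ne_of_mem_erase hj)]
            rw [this]
          have h4 : w i = v i + -1 := by simp [hw]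
          omega
        rw [hgv]
        exact ih _ hsum w rfl


def L (g : ℤ → ℤ) (a : ℤ) : ℤ :=
  if 0 ≤ a then ∑ t ∈ Finset.range a.toNat, g t
  else -∑ t ∈ Finset.range (-a).toNat, g (a + t)

lemma L_zero (g : ℤ → ℤ) : L g 0 = 0 := by simp [L]

lemma L_succ (g : ℤ → ℤ) (a : ℤ) : L g (a + 1) = L g a + g a := by
  rcases le_or_gt 0 a with ha | ha
  · have h1 : (0:ℤ) ≤ a + 1 := by omega
    rw [L, L, if_pos h1, if_pos ha]
    have h2 : (a+1).toNat = a.toNat + 1 := by omega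
    rw [h2, Finset.sum_range_succ]
    congr 2
    omega
  · have h1 : ¬ (0:ℤ) ≤ a := by omega
    rw [L, L, if_neg h1]
    rcases le_or_gt 0 (a+1) with h2 | h2
    · -- a = -1
      have ha1 : a = -1 := by omega
      subst ha1
      simp [L]
    · rw [if_neg (by omega)]
      have h3 : (-a).toNat = (-(a+1)).toNat + 1 := by omega
      rw [h3, Finset.sum_range_succ']
      have h4 : ∀ t ∈ Finset.range (-(a+1)).toNat, g (a + ((t:ℤ) + 1)) = g (a + 1 + t) := by
        intro t _; congr 1; push_cast; ring
      have h5 : ∑ k ∈ Finset.range (-(a+1)).toNat, g (a + ((k:ℕ)+1 : ℕ))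
          = ∑ t ∈ Finset.range (-(a+1)).toNat, g (a + 1 + t) := by
        apply Finset.sum_congr rfl
        intro t ht
        rw [← h4 t ht]
        congr 1
      rw [h5]
      simp


namespace Aux4
open P3C

variable {n d : ℕ}

lemma single_apply (i j : Fin d) (c : ℤ) : (Pi.single i c : Fin d → ℤ) j = if j = i then c else 0 := by
  by_cases h : j = i
  · subst h; simp
  · simp [Pi.single_eq_of_ne h, h]

lemma adj_single (v : Fin d → ℤ) (i : Fin d) (c : ℤ) (hc : c = 1 ∨ c = -1) :
    (latticeGraph d).Adj v (v + Pi.single i c) := by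
  refine ⟨i, ?_, fun j hj => by simp [Pi.single_eq_of_ne hj]⟩
  rcases hc with h | h <;> subst h
  · left; simp
  · right
    simp only [Pi.add_apply, Pi.single_eq_same]
    ring

lemma adj_iff {v w : Fin d → ℤ} :
    (latticeGraph d).Adj v w ↔ ∃ i, w = v + Pi.single i 1 ∨ w = v + Pi.single i (-1) := by
  constructor
  · rintro ⟨i, h1, h2⟩
    refine ⟨i, ?_⟩
    rcases h1 with h | h
    · left; funext j
      by_cases hj : j = i
      · subst hj; simpa using h
      · simp [Pi.single_eq_of_ne hj, h2 j hj]
    · right; funext j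
      by_cases hj : j = i
      · subst hj; simp only [Pi.add_apply, Pi.single_eq_same]; omega
      · simp [Pi.single_eq_of_ne hj, h2 j hj]
  · rintro ⟨i, h | h⟩ <;> (subst h; exact adj_single v i _ (by tauto))

/-- The step function associated to a torus coloring. -/
def stp (n d : ℕ) (f : (Fin d → ZMod n) → Fin 3) (v : Fin d → ℤ) (i : Fin d) : ℤ :=
  if f (latticeProj n d (v + Pi.single i 1)) = f (latticeProj n d v) + 1 then 1 else -1

lemma stp_pm (f : (Fin d → ZMod n) → Fin 3) (v : Fin d → ℤ) (i : Fin d) :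
    stp n d f v i = 1 ∨ stp n d f v i = -1 := by
  unfold stp; split <;> tauto

lemma proj_adj (v : Fin d → ℤ) (i : Fin d) :
    torusAdj n d (latticeProj n d v) (latticeProj n d (v + Pi.single i 1)) := by
  refine ⟨i, Or.inl ?_, fun j hj => by simp [latticeProj, Pi.single_eq_of_ne hj]⟩
  simp [latticeProj]

lemma fin3_cases : ∀ a b : Fin 3, b ≠ a → b ≠ a + 1 → b = a - 1 := by decide

lemma stp_cast (f : (Fin d → ZMod n) → Fin 3) (hf : IsProperColoring n d f)
    (v : Fin d → ℤ) (i : Fin d) :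
    ((stp n d f v i : ZMod 3)) =
      ((f (latticeProj n d (v + Pi.single i 1))).val : ZMod 3)
        - ((f (latticeProj n d v)).val : ZMod 3) := by
  have hne : f (latticeProj n d (v + Pi.single i 1)) ≠ f (latticeProj n d v) :=
    fun h => hf _ _ (proj_adj v i) h.symm
  unfold stp
  split
  · rename_i h
    rw [h]
    generalize f (latticeProj n d v) = a
    revert a; decide
  · rename_i h
    rw [fin3_cases _ _ hne h]
    generalize f (latticeProj n d v) = a
    revert a; decide

lemma vec_comm (v : Fin d → ℤ) (a b : Fin d → ℤ) : v + a + b = v + b + a := by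
  rw [add_assoc, add_comm a b, add_assoc]

lemma curl (f : (Fin d → ZMod n) → Fin 3) (hf : IsProperColoring n d f)
    (v : Fin d → ℤ) (i j : Fin d) :
    stp n d f v i + stp n d f (v + Pi.single i 1) j
      = stp n d f v j + stp n d f (v + Pi.single j 1) i := by
  have hcast : (((stp n d f v i + stp n d f (v + Pi.single i 1) j
      - (stp n d f v j + stp n d f (v + Pi.single j 1) i) : ℤ)) : ZMod 3) = 0 := by
    push_cast
    rw [stp_cast f hf, stp_cast f hf, stp_cast f hf, stp_cast f hf,
      vec_comm v (Pi.single j 1) (Pi.single i 1)]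
    ring
  have hdvd : (3:ℤ) ∣ (stp n d f v i + stp n d f (v + Pi.single i 1) j
      - (stp n d f v j + stp n d f (v + Pi.single j 1) i)) := by
    exact_mod_cast (ZMod.intCast_zmod_eq_zero_iff_dvd _ 3).mp hcast
  rcases stp_pm f v i with h1 | h1 <;> rcases stp_pm f (v + Pi.single i 1) j with h2 | h2 <;>
    rcases stp_pm f v j with h3 | h3 <;> rcases stp_pm f (v + Pi.single j 1) i with h4 | h4 <;>
    omega

/-- Staircase truncation: coordinates below `i` from `v`, coordinate `i` equal to `t`,
coordinates above `i` zero. -/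
def stair (v : Fin d → ℤ) (i : Fin d) (t : ℤ) : Fin d → ℤ :=
  fun j => if j < i then v j else if j = i then t else 0

/-- The height function obtained by integrating `stp` along staircase paths. -/
def hgt (n d : ℕ) (f : (Fin d → ZMod n) → Fin 3) (v : Fin d → ℤ) : ℤ :=
  ∑ i, L (fun t => stp n d f (stair v i t) i) (v i)

lemma hgt_zero (f : (Fin d → ZMod n) → Fin 3) : hgt n d f 0 = 0 := by
  unfold hgt
  simp [L_zero]

lemma stair_add_single_ge (v : Fin d → ℤ) (i j : Fin d) (hj : ¬ j < i) (t : ℤ) :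
    stair (v + Pi.single j 1) i t = stair v i t := by
  funext k
  simp only [stair, Pi.add_apply, single_apply]
  by_cases hk : k = j
  · subst hk
    by_cases h1 : k < i
    · omega
    · simp [h1]
  · simp [hk]

lemma stair_self (v : Fin d → ℤ) (i : Fin d) (htrail : ∀ j, i < j → v j = 0) :
    stair v i (v i) = v := by
  funext k
  simp only [stair]
  by_cases h1 : k < i
  · simp [h1]
  · by_cases h2 : k = i
    · simp [h2]
    · have : i < k := by omega
      simp [h1, h2, (htrail k this).symm]

/-- Base case: incrementing coordinate `i` when all later coordinates vanish. -/
lemma hgt_step_base (f : (Fin d → ZMod n) → Fin 3) (v : Fin d → ℤ) (i : Fin d)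
    (htrail : ∀ j, i < j → v j = 0) :
    hgt n d f (v + Pi.single i 1) = hgt n d f v + stp n d f v i := by
  unfold hgt
  have key : ∀ j : Fin d,
      L (fun t => stp n d f (stair (v + Pi.single i 1) j t) j) ((v + Pi.single i 1 : Fin d → ℤ) j)
        = L (fun t => stp n d f (stair v j t) j) (v j)
          + (if j = i then stp n d f v i else 0) := by
    intro j
    rcases lt_trichotomy j i with hji | hji | hji
    · have hne : ¬ j = i := ne_of_lt hji
      have h1 : (v + Pi.single i 1 : Fin d → ℤ) j = v j := by
        simp [single_apply, hne]
      have h2 : ∀ t, stair (v + Pi.single i 1) j t = stair v j t :=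
        stair_add_single_ge v j i (by rw [not_lt]; exact le_of_lt hji)
      rw [h1, (by simp [hne] : (if j = i then stp n d f v i else 0) = 0), add_zero]
      congr 1
      funext t
      rw [h2]
    · subst hji
      have h1 : (v + Pi.single j 1 : Fin d → ℤ) j = v j + 1 := by simp [single_apply]
      have h2 : ∀ t, stair (v + Pi.single j 1) j t = stair v j t :=
        stair_add_single_ge v j j (by omega)
      rw [h1, if_pos rfl]
      have h3 : (fun t => stp n d f (stair (v + Pi.single j 1) j t) j)
          = fun t => stp n d f (stair v j t) j := by
        funext t; rw [h2]
      rw [h3, L_succ, stair_self v j htrail]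
    · have hne : ¬ j = i := ne_of_gt hji
      have h1 : (v + Pi.single i 1 : Fin d → ℤ) j = v j := by
        simp [single_apply, hne]
      have h2 : v j = 0 := htrail j hji
      rw [h1, h2, (by simp [hne] : (if j = i then stp n d f v i else 0) = 0),
        add_zero, L_zero, L_zero]
  rw [Finset.sum_congr rfl (fun j _ => key j), Finset.sum_add_distrib,
    Finset.sum_ite_eq' Finset.univ i (fun _ => stp n d f v i)]
  simp

lemma hgt_step (f : (Fin d → ZMod n) → Fin 3) (hf : IsProperColoring n d f) :
    ∀ (v : Fin d → ℤ) (i : Fin d),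
      hgt n d f (v + Pi.single i 1) = hgt n d f v + stp n d f v i := by
  suffices H : ∀ M : ℕ, ∀ (v : Fin d → ℤ) (i : Fin d),
      (∑ j ∈ Finset.univ.filter (fun j => i < j), (v j).natAbs) = M →
      hgt n d f (v + Pi.single i 1) = hgt n d f v + stp n d f v i by
    exact fun v i => H _ v i rfl
  intro M
  induction M using Nat.strong_induction_on with
  | _ M ih =>
    intro v i hv
    by_cases h0 : ∀ j, i < j → v j = 0
    · exact hgt_step_base f v i h0
    · push_neg at h0
      have hS : (Finset.univ.filter (fun j => i < j ∧ v j ≠ 0)).Nonempty := by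
        obtain ⟨j, hj1, hj2⟩ := h0
        exact ⟨j, by simp [hj1, hj2]⟩
      set j := (Finset.univ.filter (fun j => i < j ∧ v j ≠ 0)).max' hS with hjdef
      have hjmem : i < j ∧ v j ≠ 0 := by
        have := (Finset.univ.filter (fun j => i < j ∧ v j ≠ 0)).max'_mem hS
        simpa using this
      have hjmax : ∀ k, j < k → v k = 0 := by
        intro k hk
        by_contra hvk
        have hik : i < k := lt_trans hjmem.1 hk
        have : k ≤ j := Finset.le_max' _ k (by simp [hik, hvk])
        omega
      obtain ⟨hij, hvj⟩ := hjmem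
      have measure_lt : ∀ w : Fin d → ℤ, (∀ k, k ≠ j → w k = v k) →
          (w j).natAbs < (v j).natAbs →
          (∑ k ∈ Finset.univ.filter (fun k => i < k), (w k).natAbs) < M := by
        intro w hwk hwj
        rw [← hv]
        have hjin : j ∈ Finset.univ.filter (fun k => i < k) := by simp [hij]
        rw [← Finset.add_sum_erase _ _ hjin, ← Finset.add_sum_erase _ _ hjin]
        have : ∑ k ∈ (Finset.univ.filter (fun k => i < k)).erase j, (w k).natAbs
            = ∑ k ∈ (Finset.univ.filter (fun k => i < k)).erase j, (v k).natAbs := by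
          apply Finset.sum_congr rfl
          intro k hk
          rw [hwk k (Finset.ne_of_mem_erase hk)]
        omega
      rcases lt_or_gt_of_ne hvj with hneg | hpos
      · -- v j < 0 : move up
        set w := v + Pi.single j 1 with hwdef
        have hwk : ∀ k, k ≠ j → w k = v k := by
          intro k hk; simp [hwdef, single_apply, hk]
        have hwj : w j = v j + 1 := by simp [hwdef, single_apply]
        have htrvi : ∀ k, j < k → (v + Pi.single i 1 : Fin d → ℤ) k = 0 := by
          intro k hk
          have : ¬ k = i := ne_of_gt (lt_trans hij hk)
          simp [single_apply, this, hjmax k hk]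
        have B1 := hgt_step_base f v j hjmax
        have B2 := hgt_step_base f (v + Pi.single i 1) j htrvi
        have I1 : hgt n d f (w + Pi.single i 1) = hgt n d f w + stp n d f w i :=
          ih _ (measure_lt w hwk (by omega)) w i rfl
        have C := curl f hf v i j
        have e1 : v + Pi.single i 1 + Pi.single j 1 = w + Pi.single i 1 :=
          vec_comm v _ _
        rw [e1] at B2
        rw [I1] at B2
        rw [← hwdef] at B1 C
        rcases stp_pm (n := n) f (v + Pi.single i 1) j with h | h <;>
          rcases stp_pm (n := n) f v j with h' | h' <;> omega
      · -- v j > 0 : move down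
        set w := v + Pi.single j (-1) with hwdef
        have hwk : ∀ k, k ≠ j → w k = v k := by
          intro k hk; simp [hwdef, single_apply, hk]
        have hwj : w j = v j + -1 := by simp [hwdef, single_apply]
        have hwv : w + Pi.single j 1 = v := by
          funext k
          rw [Pi.add_apply]
          by_cases hk : k = j
          · subst hk
            rw [Pi.single_eq_same, hwj]
            ring
          · rw [single_apply, if_neg hk, add_zero]
            exact hwk k hk
        have htrw : ∀ k, j < k → w k = 0 := by
          intro k hk
          rw [hwk k (ne_of_gt hk)]
          exact hjmax k hk
        have htrwi : ∀ k, j < k → (w + Pi.single i 1 : Fin d → ℤ) k = 0 := by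
          intro k hk
          have : ¬ k = i := ne_of_gt (lt_trans hij hk)
          simp [single_apply, this, htrw k hk]
        have B1 := hgt_step_base f w j htrw
        have B2 := hgt_step_base f (w + Pi.single i 1) j htrwi
        have I1 : hgt n d f (w + Pi.single i 1) = hgt n d f w + stp n d f w i :=
          ih _ (measure_lt w hwk (by omega)) w i rfl
        have C := curl f hf w i j
        have e1 : w + Pi.single i 1 + Pi.single j 1 = v + Pi.single i 1 := by
          rw [vec_comm, hwv]
        rw [e1] at B2
        rw [hwv] at B1 C
        rcases stp_pm (n := n) f (w + Pi.single i 1) j with h | h <;>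
          rcases stp_pm (n := n) f w j with h' | h' <;> omega

lemma hgt_hhf (f : (Fin d → ZMod n) → Fin 3) (hf : IsProperColoring n d f) :
    IsLatticeHHF d (hgt n d f) := by
  intro v w hadj
  rcases adj_iff.mp hadj with ⟨i, h | h⟩
  · subst h
    rw [hgt_step f hf v i]
    rcases stp_pm (n := n) f v i with h | h <;> rw [h] <;> norm_num
  · subst h
    have hv : (v + Pi.single i (-1)) + Pi.single i 1 = v := by
      funext k
      rw [Pi.add_apply, Pi.add_apply]
      by_cases hk : k = i
      · subst hk; simp
      · simp [single_apply, hk]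
    have key := hgt_step f hf (v + Pi.single i (-1)) i
    rw [hv] at key
    rw [key, add_sub_cancel_left]
    rcases stp_pm (n := n) f (v + Pi.single i (-1)) i with h | h <;> rw [h] <;> norm_num

lemma hgt_mod3 (f : (Fin d → ZMod n) → Fin 3) (hf : IsProperColoring n d f)
    (hf0 : f 0 = 0) (v : Fin d → ℤ) :
    ((hgt n d f v : ZMod 3)) = ((f (latticeProj n d v)).val : ZMod 3) := by
  have key : ∀ v : Fin d → ℤ,
      ((hgt n d f v : ZMod 3)) - ((f (latticeProj n d v)).val : ZMod 3) =
      ((hgt n d f 0 : ZMod 3)) - ((f (latticeProj n d 0)).val : ZMod 3) := by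
    apply const_of_step
    intro v i
    rw [hgt_step f hf v i]
    push_cast
    rw [stp_cast f hf v i]
    ring
  have h0 : latticeProj n d 0 = 0 := by
    funext i
    simp [latticeProj]
  have := key v
  rw [hgt_zero, h0, hf0] at this
  exact sub_eq_zero.mp (by simpa using this)

lemma hgt_parity (f : (Fin d → ZMod n) → Fin 3) (hf : IsProperColoring n d f)
    (v : Fin d → ℤ) :
    ((hgt n d f v : ZMod 2)) = ∑ i, (((v i : ℤ) : ZMod 2)) := by
  have key : ∀ v : Fin d → ℤ,
      ((hgt n d f v : ZMod 2)) - ∑ i, (((v i : ℤ) : ZMod 2)) =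
      ((hgt n d f 0 : ZMod 2)) - ∑ i, ((((0 : Fin d → ℤ) i : ℤ) : ZMod 2)) := by
    apply const_of_step
    intro v j
    rw [hgt_step f hf v j]
    have hsum : ∑ i, ((((v + Pi.single j 1 : Fin d → ℤ) i : ℤ) : ZMod 2))
        = (∑ i, (((v i : ℤ) : ZMod 2))) + 1 := by
      have h1 : ∀ i : Fin d, ((((v + Pi.single j 1 : Fin d → ℤ) i : ℤ) : ZMod 2))
          = ((v i : ℤ) : ZMod 2) + (if i = j then 1 else 0) := by
        intro i
        rw [Pi.add_apply, single_apply]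
        by_cases hi : i = j
        · simp [hi]
        · simp [hi]
      rw [Finset.sum_congr rfl (fun i _ => h1 i), Finset.sum_add_distrib,
        Finset.sum_ite_eq' Finset.univ j (fun _ => (1 : ZMod 2))]
      simp
    rw [hsum]
    have hstp : ((stp n d f v j : ZMod 2)) = 1 := by
      rcases stp_pm (n := n) f v j with h | h <;> rw [h] <;> decide
    push_cast
    rw [hstp]
    ring
  have := key v
  rw [hgt_zero] at this
  exact sub_eq_zero.mp (by simpa using this)

lemma proj_add_n (v : Fin d → ℤ) (j : Fin d) :
    latticeProj n d (v + Pi.single j (n : ℤ)) = latticeProj n d v := by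
  funext i
  show (((v + Pi.single j (n:ℤ) : Fin d → ℤ) i : ℤ) : ZMod n) = _
  rw [Pi.add_apply, single_apply]
  by_cases hi : i = j
  · simp [hi, ZMod.natCast_self, latticeProj]
  · simp [hi, latticeProj]

lemma stp_period (f : (Fin d → ZMod n) → Fin 3) (v : Fin d → ℤ) (i j : Fin d) :
    stp n d f (v + Pi.single j (n : ℤ)) i = stp n d f v i := by
  unfold stp
  rw [vec_comm v (Pi.single j (n:ℤ)) (Pi.single i 1), proj_add_n, proj_add_n]

lemma hgt_qp (f : (Fin d → ZMod n) → Fin 3) (hf : IsProperColoring n d f)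
    (v : Fin d → ℤ) (j : Fin d) :
    hgt n d f (v + Pi.single j (n : ℤ)) = hgt n d f v + hgt n d f (Pi.single j (n : ℤ)) := by
  have key : ∀ v : Fin d → ℤ,
      hgt n d f (v + Pi.single j (n : ℤ)) - hgt n d f v =
      hgt n d f ((0 : Fin d → ℤ) + Pi.single j (n : ℤ)) - hgt n d f 0 := by
    apply const_of_step
    intro v i
    have e1 : v + Pi.single i 1 + Pi.single j (n:ℤ) = v + Pi.single j (n:ℤ) + Pi.single i 1 :=
      vec_comm v _ _
    have h1 := hgt_step f hf v i
    have h2 := hgt_step f hf (v + Pi.single j (n:ℤ)) i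
    have h3 := stp_period f v i j
    rw [e1, h1, h2, h3]
    ring
  have := key v
  rw [hgt_zero, zero_add] at this
  omega

lemma hgt_bound (f : (Fin d → ZMod n) → Fin 3) (hf : IsProperColoring n d f)
    (j : Fin d) (k : ℕ) :
    |hgt n d f (Pi.single j (k : ℤ))| ≤ (k : ℤ) := by
  induction k with
  | zero => simp [hgt_zero]
  | succ k ihk =>
    have h1 : (Pi.single j ((k+1 : ℕ) : ℤ) : Fin d → ℤ)
        = Pi.single j (k : ℤ) + Pi.single j 1 := by
      rw [← Pi.single_add]
      congr 1
    rw [h1, hgt_step f hf]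
    have h2 := abs_add_le (hgt n d f (Pi.single j (k:ℤ))) (stp n d f (Pi.single j (k:ℤ)) j)
    have h3 : |stp n d f (Pi.single j (k:ℤ)) j| = 1 := by
      rcases stp_pm (n := n) f (Pi.single j (k:ℤ)) j with h | h <;> rw [h] <;> norm_num
    push_cast
    rw [h3] at h2
    omega

lemma liftproj [NeZero n] (x : Fin d → ZMod n) :
    latticeProj n d (fun i => ((x i).val : ℤ)) = x := by
  funext i
  show (((x i).val : ℤ) : ZMod n) = x i
  push_cast
  exact ZMod.natCast_rightInverse (x i)

lemma proj_single_n (j : Fin d) : latticeProj n d (Pi.single j (n : ℤ)) = 0 := by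
  funext k
  show (((Pi.single j (n:ℤ) : Fin d → ℤ) k : ℤ) : ZMod n) = 0
  rw [single_apply]
  by_cases hk : k = j
  · simp [hk, ZMod.natCast_self]
  · simp [hk]

lemma hgt_mem (hn : Even n) (f : (Fin d → ZMod n) → Fin 3) (hf : IsProperColoring n d f)
    (hf0 : f 0 = 0) : hgt n d f ∈ QPset n d := by
  refine ⟨fun j => hgt n d f (Pi.single j (n : ℤ)), fun i => ⟨?_, ?_⟩,
    ⟨⟨hgt_hhf f hf, hgt_zero f⟩, fun v i => hgt_qp f hf v i⟩⟩
  · -- 6 ∣ m i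
    have hc2 : ((hgt n d f (Pi.single i (n : ℤ)) : ZMod 2)) = 0 := by
      rw [hgt_parity f hf]
      have h1 : ∀ j : Fin d, (((Pi.single i (n:ℤ) : Fin d → ℤ) j : ℤ) : ZMod 2)
          = if j = i then (((n:ℤ) : ZMod 2)) else 0 := by
        intro j
        rw [single_apply]
        split <;> simp
      rw [Finset.sum_congr rfl (fun j _ => h1 j),
        Finset.sum_ite_eq' Finset.univ i (fun _ => (((n:ℤ)) : ZMod 2))]
      simp only [Finset.mem_univ, if_true]
      push_cast
      rw [ZMod.natCast_eq_zero_iff]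
      exact hn.two_dvd
    have h2 : (2:ℤ) ∣ hgt n d f (Pi.single i (n : ℤ)) :=
      (ZMod.intCast_zmod_eq_zero_iff_dvd _ 2).mp hc2
    have hc3 : ((hgt n d f (Pi.single i (n : ℤ)) : ZMod 3)) = 0 := by
      rw [hgt_mod3 f hf hf0, proj_single_n, hf0]
      simp
    have h3 : (3:ℤ) ∣ hgt n d f (Pi.single i (n : ℤ)) :=
      (ZMod.intCast_zmod_eq_zero_iff_dvd _ 3).mp hc3
    show (6:ℤ) ∣ hgt n d f (Pi.single i (n : ℤ))
    omega
  · exact hgt_bound f hf i n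

lemma toCol_val (h : (Fin d → ℤ) → ℤ) (x : Fin d → ZMod n) :
    ((toCol n d h x : ℕ) : ℤ) = h (fun i => ((x i).val : ℤ)) % 3 := by
  show (((h (fun i => ((x i).val : ℤ)) % 3).toNat : ℕ) : ℤ) = _
  exact Int.toNat_of_nonneg (Int.emod_nonneg _ (by norm_num))

lemma part1 (hn2 : 2 ≤ n) (h : (Fin d → ℤ) → ℤ) (hh : h ∈ QPset n d) (v : Fin d → ℤ) :
    ((toCol n d h (latticeProj n d v) : ℕ) : ℤ) = h v % 3 := by
  haveI : NeZero n := ⟨by omega⟩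
  obtain ⟨m, hm, ⟨⟨hhhf, hh0⟩, hper⟩⟩ := hh
  rw [toCol_val]
  set Lx : Fin d → ℤ := fun i => (((latticeProj n d v i).val : ℤ)) with hLxdef
  have hLx : ∀ i, Lx i = v i % n := by
    intro i
    simp only [hLxdef, latticeProj]
    exact ZMod.val_intCast (v i)
  have hm3 : ∀ i, (3:ℤ) ∣ m i := fun i => dvd_trans (by norm_num) (hm i).1
  have key : ∀ k : Fin d → ℤ,
      ((h (Lx + fun j => (n:ℤ) * k j) : ZMod 3))
        = ((h (Lx + fun j => (n:ℤ) * (0:Fin d → ℤ) j) : ZMod 3)) := by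
    apply const_of_step
    intro k i
    have harg : (Lx + fun j => (n:ℤ) * (k + Pi.single i 1 : Fin d → ℤ) j)
        = (Lx + fun j => (n:ℤ) * k j) + Pi.single i (n : ℤ) := by
      funext j
      simp only [Pi.add_apply]
      rw [single_apply, single_apply]
      by_cases hj : j = i <;> simp [hj] <;> ring
    rw [harg, hper]
    have hz : ((m i : ZMod 3)) = 0 :=
      (ZMod.intCast_zmod_eq_zero_iff_dvd _ 3).mpr (hm3 i)
    push_cast
    rw [hz]
    ring
  have hval : (Lx + fun j => (n:ℤ) * (fun j => v j / n) j) = v := by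
    funext j
    show Lx j + (n:ℤ) * (v j / n) = v j
    rw [hLx j]
    exact Int.emod_add_mul_ediv (v j) n
  have hzero : (Lx + fun j => (n:ℤ) * (0:Fin d → ℤ) j) = Lx := by
    funext j
    show Lx j + (n:ℤ) * 0 = Lx j
    ring
  have hk := key (fun j => v j / n)
  rw [hval, hzero] at hk
  have hmod : h Lx ≡ h v [ZMOD 3] := (ZMod.intCast_eq_intCast_iff _ _ _).mp hk.symm
  exact hmod

lemma hhf_ext (h1 h2 : (Fin d → ℤ) → ℤ) (hh1 : IsLatticeHHF d h1) (hh2 : IsLatticeHHF d h2)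
    (h0 : h1 0 = h2 0) (hmod : ∀ v, h1 v % 3 = h2 v % 3) : h1 = h2 := by
  have key : ∀ v, h1 v - h2 v = h1 0 - h2 0 := by
    apply const_of_step
    intro v i
    have ha := hh1 v (v + Pi.single i 1) (adj_single v i 1 (by norm_num))
    have hb := hh2 v (v + Pi.single i 1) (adj_single v i 1 (by norm_num))
    rw [abs_eq (by norm_num : (0:ℤ) ≤ 1)] at ha hb
    have m1 := hmod v
    have m2 := hmod (v + Pi.single i 1)
    omega
  funext v
  have := key v
  omega

lemma toCol_hgt (hn2 : 2 ≤ n) (f : (Fin d → ZMod n) → Fin 3) (hf : IsProperColoring n d f)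
    (hf0 : f 0 = 0) : toCol n d (hgt n d f) = f := by
  haveI : NeZero n := ⟨by omega⟩
  funext x
  apply Fin.ext
  show (hgt n d f (fun i => ((x i).val : ℤ)) % 3).toNat = (f x).val
  have e1 : ((hgt n d f (fun i => ((x i).val : ℤ)) : ZMod 3)) = ((f x).val : ZMod 3) := by
    rw [hgt_mod3 f hf hf0, liftproj]
  have l1 : (((hgt n d f (fun i => ((x i).val : ℤ)) : ZMod 3)).val : ℤ)
      = hgt n d f (fun i => ((x i).val : ℤ)) % 3 := ZMod.val_intCast _
  have l2 : (((f x).val : ZMod 3)).val = (f x).val % 3 := ZMod.val_natCast _ _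
  have l3 : (f x).val % 3 = (f x).val := Nat.mod_eq_of_lt (f x).is_lt
  rw [e1, l2, l3] at l1
  omega

lemma toCol_mapsTo (hn2 : 2 ≤ n) (h : (Fin d → ℤ) → ℤ) (hh : h ∈ QPset n d) :
    toCol n d h ∈ colZero n d := by
  haveI : NeZero n := ⟨by omega⟩
  obtain ⟨m, hm, ⟨⟨hhhf, hh0⟩, hper⟩⟩ := id hh
  constructor
  · -- proper coloring
    intro v w hadj
    obtain ⟨i, hcase, hrest⟩ := hadj
    set a : Fin d → ℤ := fun k => ((v k).val : ℤ) with hadef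
    have hc : ∃ c : ℤ, (c = 1 ∨ c = -1) ∧ w i = v i + (c : ZMod n) := by
      rcases hcase with h1 | h1
      · exact ⟨1, Or.inl rfl, by rw [h1]; norm_num⟩
      · exact ⟨-1, Or.inr rfl, by rw [h1]; push_cast; ring⟩
    obtain ⟨c, hc1, hc2⟩ := hc
    set b := a + Pi.single i c with hbdef
    have hpa : latticeProj n d a = v := liftproj v
    have hpb : latticeProj n d b = w := by
      funext k
      show ((b k : ℤ) : ZMod n) = w k
      have hbk : b k = a k + (Pi.single i c : Fin d → ℤ) k := rfl
      by_cases hk : k = i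
      · subst hk
        rw [hbk, single_apply, if_pos rfl, hc2]
        push_cast
        congr 1
        exact congrFun hpa k
      · rw [hbk, single_apply, if_neg hk, add_zero, hrest k hk]
        exact congrFun hpa k
    have habs : |h a - h b| = 1 := hhhf a b (adj_single a i c hc1)
    have p1 := part1 hn2 h hh a
    have p2 := part1 hn2 h hh b
    rw [hpa] at p1
    rw [hpb] at p2
    intro heq
    rw [heq] at p1
    rw [abs_eq (by norm_num : (0:ℤ) ≤ 1)] at habs
    omega
  · -- value at zero
    apply Fin.ext
    show (h (fun i => (((0 : Fin d → ZMod n) i).val : ℤ)) % 3).toNat = (0 : Fin 3).val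
    have hz : (fun i => (((0 : Fin d → ZMod n) i).val : ℤ)) = (0 : Fin d → ℤ) := by
      funext i
      show (((0 : ZMod n)).val : ℤ) = 0
      simp [ZMod.val_zero]
    rw [hz, hh0]
    rfl

end Aux4

theorem stmt4 (n d : ℕ) (hn : Even n) (hn2 : 2 ≤ n) :
    (∀ h ∈ P3C.QPset n d, ∀ v : Fin d → ℤ,
        ((P3C.toCol n d h (P3C.latticeProj n d v) : ℕ) : ℤ) = h v % 3) ∧
    Set.BijOn (P3C.toCol n d) (P3C.QPset n d) (P3C.colZero n d) := by
  constructor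
  · exact fun h hh v => Aux4.part1 hn2 h hh v
  · refine ⟨fun h hh => Aux4.toCol_mapsTo hn2 h hh, ?_, ?_⟩
    · -- injective
      intro h1 hh1 h2 hh2 heq
      obtain ⟨m1, _, ⟨⟨hf1, h01⟩, _⟩⟩ := id hh1
      obtain ⟨m2, _, ⟨⟨hf2, h02⟩, _⟩⟩ := id hh2
      apply Aux4.hhf_ext h1 h2 hf1 hf2 (by rw [h01, h02])
      intro v
      have p1 := Aux4.part1 hn2 h1 hh1 v
      have p2 := Aux4.part1 hn2 h2 hh2 v
      rw [heq] at p1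
      omega
    · -- surjective
      intro f hf
      exact ⟨Aux4.hgt n d f, Aux4.hgt_mem hn f hf.1 hf.2,
        Aux4.toCol_hgt hn2 f hf.1 hf.2⟩
end

section
/- If U1, U2 ⊆ ℤ^d are bi-connected and boundary disjoint sets, then exactly one of the following three alternatives holds: (i) U1 ∩ U2 = ∅; (ii) U1^c ∩ U2^c = ∅; (iii) U1 ⊊ U2 or U2 ⊊ U1. -/
namespace Stmt8Aux
open P3C

variable {d : ℕ}

open Classical in
noncomputable def cell (U1 U2 : Set (Fin d → ℤ)) (v : Fin d → ℤ) : ℤ :=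
  if v ∈ U1 then (if v ∈ U2 then 2 else 3) else (if v ∈ U2 then 1 else 0)

open Classical in
noncomputable def del (U1 U2 : Set (Fin d → ℤ)) (v w : Fin d → ℤ) : ℤ :=
  if cell U1 U2 w = cell U1 U2 v then 0
  else if cell U1 U2 w = cell U1 U2 v + 1 ∨ cell U1 U2 w = cell U1 U2 v - 3 then 1 else -1

variable {U1 U2 : Set (Fin d → ℤ)}

lemma cell_mem (v : Fin d → ℤ) :
    (cell U1 U2 v = 0 ∧ v ∉ U1 ∧ v ∉ U2) ∨ (cell U1 U2 v = 1 ∧ v ∉ U1 ∧ v ∈ U2) ∨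
    (cell U1 U2 v = 2 ∧ v ∈ U1 ∧ v ∈ U2) ∨ (cell U1 U2 v = 3 ∧ v ∈ U1 ∧ v ∉ U2) := by
  unfold cell; split_ifs <;> tauto

lemma cell_range (v : Fin d → ℤ) : 0 ≤ cell U1 U2 v ∧ cell U1 U2 v ≤ 3 := by
  unfold cell; split_ifs <;> norm_num

lemma del_bound (v w : Fin d → ℤ) : -1 ≤ del U1 U2 v w ∧ del U1 U2 v w ≤ 1 := by
  unfold del; split_ifs <;> norm_num

lemma not_both (hE : edgeBdry d U1 ∩ edgeBdry d U2 = ∅) {v w : Fin d → ℤ}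
    (hvw : (latticeGraph d).Adj v w) : (v ∈ U1 ↔ w ∈ U1) ∨ (v ∈ U2 ↔ w ∈ U2) := by
  by_contra hc
  push_neg at hc
  obtain ⟨hA, hB⟩ := hc
  have e1 : (v, w) ∈ edgeBdry d U1 := ⟨hvw, by tauto⟩
  have e2 : (v, w) ∈ edgeBdry d U2 := ⟨hvw, by tauto⟩
  exact Set.eq_empty_iff_forall_notMem.mp hE (v, w) ⟨e1, e2⟩

lemma del_spec (hE : edgeBdry d U1 ∩ edgeBdry d U2 = ∅) {v w : Fin d → ℤ}
    (hvw : (latticeGraph d).Adj v w) :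
    del U1 U2 w v = - del U1 U2 v w ∧ (cell U1 U2 w - cell U1 U2 v - del U1 U2 v w) % 4 = 0 := by
  have hnb := not_both hE hvw
  by_cases h1 : v ∈ U1 <;> by_cases h2 : v ∈ U2 <;> by_cases h3 : w ∈ U1 <;>
    by_cases h4 : w ∈ U2 <;> simp_all [cell, del]


lemma cycle_rot {a b c e : Fin d → ℤ} (h : IsFourCycle d a b c e) : IsFourCycle d e a b c :=
  ⟨h.2.2.2.1, h.1, h.2.1, h.2.2.1, h.2.2.2.2.2.symm, h.2.2.2.2.1⟩

lemma cycle_rev {a b c e : Fin d → ℤ} (h : IsFourCycle d a b c e) : IsFourCycle d a e c b :=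
  ⟨h.2.2.2.1.symm, h.2.2.1.symm, h.2.1.symm, h.1.symm, h.2.2.2.2.1, h.2.2.2.2.2.symm⟩

lemma cell_eq0 {v : Fin d → ℤ} (h : cell U1 U2 v = 0) : v ∉ U1 ∧ v ∉ U2 := by
  rcases cell_mem (U1 := U1) (U2 := U2) v with ⟨h0, hm⟩ | ⟨h0, hm⟩ | ⟨h0, hm⟩ | ⟨h0, hm⟩ <;>
    first | exact hm | omega

lemma cell_eq1 {v : Fin d → ℤ} (h : cell U1 U2 v = 1) : v ∉ U1 ∧ v ∈ U2 := by
  rcases cell_mem (U1 := U1) (U2 := U2) v with ⟨h0, hm⟩ | ⟨h0, hm⟩ | ⟨h0, hm⟩ | ⟨h0, hm⟩ <;>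
    first | exact hm | omega

lemma cell_eq2 {v : Fin d → ℤ} (h : cell U1 U2 v = 2) : v ∈ U1 ∧ v ∈ U2 := by
  rcases cell_mem (U1 := U1) (U2 := U2) v with ⟨h0, hm⟩ | ⟨h0, hm⟩ | ⟨h0, hm⟩ | ⟨h0, hm⟩ <;>
    first | exact hm | omega

lemma cell_eq3 {v : Fin d → ℤ} (h : cell U1 U2 v = 3) : v ∈ U1 ∧ v ∉ U2 := by
  rcases cell_mem (U1 := U1) (U2 := U2) v with ⟨h0, hm⟩ | ⟨h0, hm⟩ | ⟨h0, hm⟩ | ⟨h0, hm⟩ <;>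
    first | exact hm | omega

lemma no_all_ones (hbd : BoundaryDisjoint d U1 U2) {a b c e : Fin d → ℤ}
    (hc : IsFourCycle d a b c e)
    (d1 : del U1 U2 a b = 1) (d2 : del U1 U2 b c = 1)
    (d3 : del U1 U2 c e = 1) (d4 : del U1 U2 e a = 1) : False := by
  have m1 := (del_spec hbd.1 hc.1).2
  have m2 := (del_spec hbd.1 hc.2.1).2
  have m3 := (del_spec hbd.1 hc.2.2.1).2
  have m4 := (del_spec hbd.1 hc.2.2.2.1).2
  have ra := cell_range (U1 := U1) (U2 := U2) a
  have rb := cell_range (U1 := U1) (U2 := U2) b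
  have rc := cell_range (U1 := U1) (U2 := U2) c
  have re := cell_range (U1 := U1) (U2 := U2) e
  rw [d1] at m1; rw [d2] at m2; rw [d3] at m3; rw [d4] at m4
  have hca : cell U1 U2 a = 0 ∨ cell U1 U2 a = 1 ∨ cell U1 U2 a = 2 ∨ cell U1 U2 a = 3 := by
    omega
  apply hbd.2
  rcases hca with h0 | h0 | h0 | h0
  · have hb : cell U1 U2 b = 1 := by omega
    have hcc : cell U1 U2 c = 2 := by omega
    have he : cell U1 U2 e = 3 := by omega
    obtain ⟨a1, a2⟩ := cell_eq0 h0
    obtain ⟨b1, b2⟩ := cell_eq1 hb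
    obtain ⟨c1, c2⟩ := cell_eq2 hcc
    obtain ⟨e1, e2⟩ := cell_eq3 he
    exact ⟨a, b, c, e, hc, ⟨a1, a2⟩, ⟨b1, b2⟩, ⟨c1, c2⟩, ⟨e1, e2⟩⟩
  · have hb : cell U1 U2 b = 2 := by omega
    have hcc : cell U1 U2 c = 3 := by omega
    have he : cell U1 U2 e = 0 := by omega
    obtain ⟨a1, a2⟩ := cell_eq1 h0
    obtain ⟨b1, b2⟩ := cell_eq2 hb
    obtain ⟨c1, c2⟩ := cell_eq3 hcc
    obtain ⟨e1, e2⟩ := cell_eq0 he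
    exact ⟨e, a, b, c, cycle_rot hc, ⟨e1, e2⟩, ⟨a1, a2⟩, ⟨b1, b2⟩, ⟨c1, c2⟩⟩
  · have hb : cell U1 U2 b = 3 := by omega
    have hcc : cell U1 U2 c = 0 := by omega
    have he : cell U1 U2 e = 1 := by omega
    obtain ⟨a1, a2⟩ := cell_eq2 h0
    obtain ⟨b1, b2⟩ := cell_eq3 hb
    obtain ⟨c1, c2⟩ := cell_eq0 hcc
    obtain ⟨e1, e2⟩ := cell_eq1 he
    exact ⟨c, e, a, b, cycle_rot (cycle_rot hc), ⟨c1, c2⟩, ⟨e1, e2⟩, ⟨a1, a2⟩, ⟨b1, b2⟩⟩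
  · have hb : cell U1 U2 b = 0 := by omega
    have hcc : cell U1 U2 c = 1 := by omega
    have he : cell U1 U2 e = 2 := by omega
    obtain ⟨a1, a2⟩ := cell_eq3 h0
    obtain ⟨b1, b2⟩ := cell_eq0 hb
    obtain ⟨c1, c2⟩ := cell_eq1 hcc
    obtain ⟨e1, e2⟩ := cell_eq2 he
    exact ⟨b, c, e, a, cycle_rot (cycle_rot (cycle_rot hc)), ⟨b1, b2⟩, ⟨c1, c2⟩, ⟨e1, e2⟩, ⟨a1, a2⟩⟩

lemma plaq (hbd : BoundaryDisjoint d U1 U2) {a b c e : Fin d → ℤ}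
    (hc : IsFourCycle d a b c e) :
    del U1 U2 a b + del U1 U2 b c + del U1 U2 c e + del U1 U2 e a = 0 := by
  have m1 := (del_spec hbd.1 hc.1).2
  have m2 := (del_spec hbd.1 hc.2.1).2
  have m3 := (del_spec hbd.1 hc.2.2.1).2
  have m4 := (del_spec hbd.1 hc.2.2.2.1).2
  have b1 := del_bound (U1 := U1) (U2 := U2) a b
  have b2 := del_bound (U1 := U1) (U2 := U2) b c
  have b3 := del_bound (U1 := U1) (U2 := U2) c e
  have b4 := del_bound (U1 := U1) (U2 := U2) e a
  have hsum : del U1 U2 a b + del U1 U2 b c + del U1 U2 c e + del U1 U2 e a = -4 ∨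
      del U1 U2 a b + del U1 U2 b c + del U1 U2 c e + del U1 U2 e a = 0 ∨
      del U1 U2 a b + del U1 U2 b c + del U1 U2 c e + del U1 U2 e a = 4 := by omega
  rcases hsum with hs | hs | hs
  · exfalso
    have e1 : del U1 U2 a b = -1 := by omega
    have e2 : del U1 U2 b c = -1 := by omega
    have e3 : del U1 U2 c e = -1 := by omega
    have e4 : del U1 U2 e a = -1 := by omega
    refine no_all_ones hbd (cycle_rev hc) ?_ ?_ ?_ ?_
    · have := (del_spec hbd.1 hc.2.2.2.1).1; omega
    · have := (del_spec hbd.1 hc.2.2.1).1; omega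
    · have := (del_spec hbd.1 hc.2.1).1; omega
    · have := (del_spec hbd.1 hc.1).1; omega
  · exact hs
  · exfalso
    exact no_all_ones hbd hc (by omega) (by omega) (by omega) (by omega)


/-! ### adjacency helpers -/

lemma adj_upd_succ (v : Fin d → ℤ) (i : Fin d) :
    (latticeGraph d).Adj v (Function.update v i (v i + 1)) :=
  ⟨i, Or.inl (by simp), fun j hj => Function.update_of_ne hj _ _⟩

lemma adj_upd (v : Fin d → ℤ) (i : Fin d) (s : ℤ) :
    (latticeGraph d).Adj (Function.update v i s) (Function.update v i (s + 1)) := by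
  have h := adj_upd_succ (Function.update v i s) i
  rwa [Function.update_self, Function.update_idem] at h

lemma ne_of_coord {v w : Fin d → ℤ} (j : Fin d) (h : v j ≠ w j) : v ≠ w :=
  fun he => h (congrFun he j)

/-! ### segment sums -/

noncomputable def segPos (U1 U2 : Set (Fin d → ℤ)) (b : Fin d → ℤ) (i : Fin d) : ℕ → ℤ
  | 0 => 0
  | n + 1 => segPos U1 U2 b i n +
      del U1 U2 (Function.update b i (n : ℤ)) (Function.update b i ((n : ℤ) + 1))

noncomputable def segNeg (U1 U2 : Set (Fin d → ℤ)) (b : Fin d → ℤ) (i : Fin d) : ℕ → ℤ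
  | 0 => 0
  | n + 1 => segNeg U1 U2 b i n +
      del U1 U2 (Function.update b i (-(n : ℤ))) (Function.update b i (-(n : ℤ) - 1))

noncomputable def seg (U1 U2 : Set (Fin d → ℤ)) (b : Fin d → ℤ) (i : Fin d) (t : ℤ) : ℤ :=
  if 0 ≤ t then segPos U1 U2 b i t.toNat else segNeg U1 U2 b i (-t).toNat

lemma seg_zero (b : Fin d → ℤ) (i : Fin d) : seg U1 U2 b i 0 = 0 := by
  simp [seg, segPos]

lemma seg_step (hE : edgeBdry d U1 ∩ edgeBdry d U2 = ∅) (b : Fin d → ℤ) (i : Fin d) (t : ℤ) :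
    seg U1 U2 b i (t + 1) = seg U1 U2 b i t +
      del U1 U2 (Function.update b i t) (Function.update b i (t + 1)) := by
  rcases le_or_gt 0 t with ht | ht
  · have h1 : (0 : ℤ) ≤ t + 1 := by omega
    rw [seg, seg, if_pos h1, if_pos ht]
    have h2 : (t + 1).toNat = t.toNat + 1 := by omega
    rw [h2, segPos]
    have h3 : ((t.toNat : ℤ)) = t := Int.toNat_of_nonneg ht
    rw [h3]
  · -- t + 1 ≤ 0
    have hanti := (del_spec hE (adj_upd b i t)).1
    have key : seg U1 U2 b i t = seg U1 U2 b i (t + 1) +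
        del U1 U2 (Function.update b i (t + 1)) (Function.update b i t) := by
      rw [seg, seg, if_neg (by omega)]
      have h2 : (-t).toNat = (-(t+1)).toNat + 1 := by omega
      rw [h2, segNeg]
      have h3 : (-(((-(t+1)).toNat : ℤ))) = t + 1 := by omega
      rw [h3]
      have h4 : (t + 1) - 1 = t := by ring
      rw [h4]
      by_cases h5 : 0 ≤ t + 1
      · rw [if_pos h5]
        have : (t + 1) = 0 := by omega
        simp [this, seg, segPos, segNeg]
      · rw [if_neg h5]
    omega

/-! ### the commutation identity -/

lemma upd_comm' (b : Fin d → ℤ) {i j : Fin d} (hij : i ≠ j) (s t : ℤ) :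
    Function.update (Function.update b j s) i t =
      Function.update (Function.update b i t) j s :=
  Function.update_comm hij.symm s t b

lemma segC (hbd : BoundaryDisjoint d U1 U2) {i j : Fin d} (hij : i ≠ j) (b : Fin d → ℤ)
    (t : ℤ) :
    seg U1 U2 b i t +
      del U1 U2 (Function.update b i t)
        (Function.update (Function.update b j (b j + 1)) i t) =
    del U1 U2 (Function.update b i 0)
        (Function.update (Function.update b j (b j + 1)) i 0) +
      seg U1 U2 (Function.update b j (b j + 1)) i t := by
  set b' := Function.update b j (b j + 1) with hb'
  have hbj : ∀ t : ℤ, Function.update b' i t = Function.update (Function.update b i t) j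
      ((Function.update b i t) j + 1) := by
    intro t
    rw [Function.update_of_ne hij.symm]
    exact upd_comm' b hij (b j + 1) t
  have hadjv : ∀ t : ℤ, (latticeGraph d).Adj (Function.update b i t) (Function.update b' i t) := by
    intro t; rw [hbj t]; exact adj_upd_succ _ j
  have hne : ∀ s t : ℤ, Function.update b i s ≠ Function.update b' i t := by
    intro s t
    apply ne_of_coord j
    rw [Function.update_of_ne hij.symm, Function.update_of_ne hij.symm, hb',
      Function.update_self]
    omega
  induction t using Int.induction_on with
  | zero => rw [seg_zero, seg_zero]; ring
  | succ k ih =>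
    have hcyc : IsFourCycle d (Function.update b i (k : ℤ)) (Function.update b i ((k : ℤ) + 1))
        (Function.update b' i ((k : ℤ) + 1)) (Function.update b' i (k : ℤ)) := by
      refine ⟨adj_upd b i k, hadjv _, (adj_upd b' i k).symm, (hadjv (k : ℤ)).symm, ?_, ?_⟩
      · exact hne _ _
      · exact hne _ _
    have hp := plaq hbd hcyc
    have a1 := (del_spec hbd.1 (adj_upd b' i (k : ℤ))).1
    have a2 := (del_spec hbd.1 (hadjv (k : ℤ))).1
    rw [seg_step hbd.1, seg_step hbd.1]
    omega
  | pred k ih =>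
    have hcyc : IsFourCycle d (Function.update b i (-(k : ℤ))) (Function.update b i (-(k : ℤ) - 1))
        (Function.update b' i (-(k : ℤ) - 1)) (Function.update b' i (-(k : ℤ))) := by
      have e1 : (-(k : ℤ) - 1) + 1 = -(k : ℤ) := by ring
      refine ⟨?_, hadjv _, ?_, (hadjv (-(k : ℤ))).symm, ?_, ?_⟩
      · have := adj_upd b i (-(k : ℤ) - 1); rw [e1] at this; exact this.symm
      · have := adj_upd b' i (-(k : ℤ) - 1); rw [e1] at this; exact this
      · exact hne _ _
      · exact hne _ _
    have hp := plaq hbd hcyc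
    have a1 := (del_spec hbd.1 (hadjv (-(k : ℤ) - 1))).1
    have a2 := (del_spec hbd.1 hcyc.1.symm).1
    have s1 := seg_step hbd.1 (U1 := U1) (U2 := U2) b i (-(k : ℤ) - 1)
    have s2 := seg_step hbd.1 (U1 := U1) (U2 := U2) b' i (-(k : ℤ) - 1)
    have e1 : (-(k : ℤ) - 1) + 1 = -(k : ℤ) := by ring
    rw [e1] at s1 s2
    have a3 := (del_spec hbd.1 (hadjv (-(k : ℤ)))).1
    have e2 : -((k : ℤ) + 1) = -(k : ℤ) - 1 := by ring
    rw [show (-((k : ℤ) + 1)) = -(k : ℤ) - 1 from by ring] at *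
    omega


/-! ### staircase construction -/

def PP (k : ℕ) (v : Fin d → ℤ) : Fin d → ℤ := fun j => if (j : ℕ) < k then v j else 0

lemma PP_zero (v : Fin d → ℤ) : PP 0 v = (0 : Fin d → ℤ) := by
  funext j; simp [PP]

lemma PP_ge (v : Fin d → ℤ) {k : ℕ} (hk : d ≤ k) : PP k v = v := by
  funext j; simp [PP, lt_of_lt_of_le j.isLt hk]

lemma PP_coord_self (v : Fin d → ℤ) {k : ℕ} (hk : k < d) : PP k v ⟨k, hk⟩ = 0 := by
  simp [PP]

lemma PP_succ (v : Fin d → ℤ) {k : ℕ} (hk : k < d) :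
    Function.update (PP k v) ⟨k, hk⟩ (v ⟨k, hk⟩) = PP (k + 1) v := by
  funext j
  rcases eq_or_ne j ⟨k, hk⟩ with rfl | hj
  · simp [PP, Function.update_self]
  · rw [Function.update_of_ne hj]
    have : (j : ℕ) ≠ k := fun h => hj (Fin.ext h)
    simp only [PP]
    have : ((j : ℕ) < k) ↔ ((j : ℕ) < k + 1) := by omega
    rw [if_congr this rfl rfl]

lemma PP_update_self (v : Fin d → ℤ) {k : ℕ} (hk : k < d) :
    Function.update (PP k v) ⟨k, hk⟩ 0 = PP k v := by
  conv_rhs => rw [← Function.update_eq_self ⟨k, hk⟩ (PP k v)]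
  rw [PP_coord_self v hk]

lemma PP_congr {v w : Fin d → ℤ} (k : ℕ) (h : ∀ j : Fin d, (j : ℕ) < k → v j = w j) :
    PP k v = PP k w := by
  funext j; simp only [PP]; split_ifs with hj
  · exact h j hj
  · rfl

noncomputable def FF (U1 U2 : Set (Fin d → ℤ)) : ℕ → (Fin d → ℤ) → ℤ
  | 0, _ => cell U1 U2 (0 : Fin d → ℤ)
  | k + 1, v => FF U1 U2 k v + if hk : k < d then seg U1 U2 (PP k v) ⟨k, hk⟩ (v ⟨k, hk⟩) else 0

noncomputable def hh (U1 U2 : Set (Fin d → ℤ)) (v : Fin d → ℤ) : ℤ := FF U1 U2 d v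

lemma FF_congr (k : ℕ) {v w : Fin d → ℤ} (h : ∀ j : Fin d, (j : ℕ) < k → v j = w j) :
    FF U1 U2 k v = FF U1 U2 k w := by
  induction k with
  | zero => rfl
  | succ k ih =>
    have h' : ∀ j : Fin d, (j : ℕ) < k → v j = w j := fun j hj => h j (by omega)
    rw [FF, FF, ih h', PP_congr k h']
    congr 1
    split_ifs with hk
    · rw [h ⟨k, hk⟩ (Nat.lt_succ_self k)]
    · rfl

lemma PP_upd_lt {v : Fin d → ℤ} {j : Fin d} {k : ℕ} (hjk : (j : ℕ) < k) (t : ℤ) :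
    PP k (Function.update v j t) = Function.update (PP k v) j t := by
  funext l
  rcases eq_or_ne l j with rfl | hl
  · simp [PP, hjk, Function.update_self]
  · rw [Function.update_of_ne hl]
    simp only [PP, Function.update_of_ne hl]

lemma finmk_ne {k : ℕ} (hk : k < d) {j : Fin d} (h : (j : ℕ) ≠ k) : j ≠ ⟨k, hk⟩ :=
  fun he => h (by rw [he])

lemma FF_step (hbd : BoundaryDisjoint d U1 U2) (v : Fin d → ℤ) (j : Fin d) (k : ℕ) :
    FF U1 U2 k (Function.update v j (v j + 1)) = FF U1 U2 k v +
      if (j : ℕ) < k then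
        del U1 U2 (PP k v) (PP k (Function.update v j (v j + 1))) else 0 := by
  set v' := Function.update v j (v j + 1) with hv'
  induction k with
  | zero => simp [FF]
  | succ k ih =>
    by_cases hjk : (j : ℕ) < k
    · -- j < k: use segC
      rw [if_pos (by omega : (j : ℕ) < k + 1)]
      rw [if_pos hjk] at ih
      rcases Nat.lt_or_ge k d with hk | hk
      · have hbase : PP k v' = Function.update (PP k v) j ((PP k v) j + 1) := by
          rw [PP_upd_lt hjk]
          congr 1
          simp [PP, hjk]
        have hij : (⟨k, hk⟩ : Fin d) ≠ j := Ne.symm (finmk_ne hk (by omega))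
        have hC := segC hbd hij (PP k v) (v ⟨k, hk⟩)
        rw [FF, FF, dif_pos hk, dif_pos hk, ih]
        have hvk : v' ⟨k, hk⟩ = v ⟨k, hk⟩ := Function.update_of_ne hij _ _
        have hPv' : Function.update (PP k v) j (PP k v j + 1) = PP k v' := hbase.symm
        rw [hvk, ← hPv']
        -- rewrite the four update terms in hC
        have u1 : Function.update (PP k v) ⟨k, hk⟩ (v ⟨k, hk⟩) = PP (k+1) v := PP_succ v hk
        have u2 : Function.update (Function.update (PP k v) j (PP k v j + 1)) ⟨k, hk⟩
            (v ⟨k, hk⟩) = PP (k+1) v' := by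
          rw [hPv']
          have := PP_succ v' hk
          rw [hvk] at this
          exact this
        have u3 : Function.update (PP k v) ⟨k, hk⟩ 0 = PP k v := PP_update_self v hk
        have u4 : Function.update (Function.update (PP k v) j (PP k v j + 1)) ⟨k, hk⟩ 0
            = PP k v' := by
          rw [hPv']
          exact PP_update_self v' hk
        rw [u1, u2, u3, u4] at hC
        rw [← hPv'] at hC
        omega
      · -- k ≥ d : impossible since j : Fin d and j < k is fine, but then PP k v = v etc.
        rw [FF, FF, dif_neg (by omega), dif_neg (by omega), ih]
        rw [PP_ge v hk, PP_ge v' hk, PP_ge v (by omega), PP_ge v' (by omega)]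
        ring
    · by_cases hjk1 : (j : ℕ) < k + 1
      · -- j = k
        have hjk2 : (j : ℕ) = k := by omega
        have hkd : k < d := by rw [← hjk2]; exact j.isLt
        have hjfin : j = (⟨k, hkd⟩ : Fin d) := Fin.ext hjk2
        rw [if_pos hjk1]
        rw [if_neg hjk, add_zero] at ih
        rw [FF, FF, dif_pos hkd, dif_pos hkd, ih]
        have hP : PP k v' = PP k v := by
          apply PP_congr
          intro l hl
          rw [hv', Function.update_of_ne]
          intro h; rw [h, hjk2] at hl; omega
        have hvk' : v' ⟨k, hkd⟩ = v ⟨k, hkd⟩ + 1 := by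
          rw [hv', ← hjfin, Function.update_self]
        rw [hP, hvk']
        rw [seg_step hbd.1]
        have u1 : Function.update (PP k v) ⟨k, hkd⟩ (v ⟨k, hkd⟩) = PP (k+1) v := PP_succ v hkd
        have u2 : Function.update (PP k v) ⟨k, hkd⟩ (v ⟨k, hkd⟩ + 1) = PP (k+1) v' := by
          have := PP_succ v' hkd
          rw [hvk'] at this
          rw [← this, ← hP]
        rw [u1, u2]
        ring
      · -- j ≥ k+1
        rw [if_neg hjk1]
        rw [if_neg hjk, add_zero] at ih
        rw [FF, FF, ih, add_zero]
        congr 1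
        split_ifs with hk
        · have hP : PP k v' = PP k v := by
            apply PP_congr
            intro l hl
            rw [hv', Function.update_of_ne]
            intro h; rw [h] at hl; omega
          have hvk : v' ⟨k, hk⟩ = v ⟨k, hk⟩ :=
            Function.update_of_ne (Ne.symm (finmk_ne hk (by omega))) _ _
          rw [hP, hvk]
        · rfl

lemma hh_step (hbd : BoundaryDisjoint d U1 U2) (v : Fin d → ℤ) (j : Fin d) :
    hh U1 U2 (Function.update v j (v j + 1)) = hh U1 U2 v +
      del U1 U2 v (Function.update v j (v j + 1)) := by
  have h := FF_step hbd v j d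
  rw [if_pos j.isLt, PP_ge v le_rfl, PP_ge _ le_rfl] at h
  exact h

lemma hh_adj (hbd : BoundaryDisjoint d U1 U2) {v w : Fin d → ℤ}
    (hvw : (latticeGraph d).Adj v w) :
    hh U1 U2 w = hh U1 U2 v + del U1 U2 v w := by
  obtain ⟨i, hi, hj⟩ := hvw
  rcases hi with hi | hi
  · have hw : w = Function.update v i (v i + 1) := by
      funext l
      rcases eq_or_ne l i with rfl | hl
      · rw [Function.update_self]; exact hi
      · rw [Function.update_of_ne hl]; exact hj l hl
    rw [hw]; exact hh_step hbd v i
  · have hv : v = Function.update w i (w i + 1) := by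
      funext l
      rcases eq_or_ne l i with rfl | hl
      · rw [Function.update_self]; omega
      · rw [Function.update_of_ne hl]; exact (hj l hl).symm
    have h2 := hh_step hbd w i
    rw [← hv] at h2
    have ha := (del_spec hbd.1 (⟨i, Or.inr hi, hj⟩ : (latticeGraph d).Adj v w)).1
    omega

/-! ### mod-4 congruence -/

lemma seg_mod (hE : edgeBdry d U1 ∩ edgeBdry d U2 = ∅) (b : Fin d → ℤ) (i : Fin d) (t : ℤ) :
    (seg U1 U2 b i t - (cell U1 U2 (Function.update b i t) -
      cell U1 U2 (Function.update b i 0))) % 4 = 0 := by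
  induction t using Int.induction_on with
  | zero => rw [seg_zero]; simp
  | succ k ih =>
    have hs := seg_step hE (U1 := U1) (U2 := U2) b i (k : ℤ)
    have hm := (del_spec hE (adj_upd b i (k : ℤ))).2
    omega
  | pred k ih =>
    have hs := seg_step hE (U1 := U1) (U2 := U2) b i (-(k : ℤ) - 1)
    rw [show (-(k : ℤ) - 1) + 1 = -(k : ℤ) from by ring] at hs
    have hm := (del_spec hE (adj_upd b i (-(k : ℤ) - 1))).2
    rw [show (-(k : ℤ) - 1) + 1 = -(k : ℤ) from by ring] at hm
    omega

lemma FF_mod (hE : edgeBdry d U1 ∩ edgeBdry d U2 = ∅) (k : ℕ) (v : Fin d → ℤ) :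
    (FF U1 U2 k v - cell U1 U2 (PP k v)) % 4 = 0 := by
  induction k with
  | zero => rw [FF, PP_zero]; simp
  | succ k ih =>
    rw [FF]
    split_ifs with hk
    · have hm := seg_mod hE (PP k v) ⟨k, hk⟩ (v ⟨k, hk⟩)
      rw [PP_succ v hk, PP_update_self v hk] at hm
      omega
    · have h1 : PP (k + 1) v = PP k v := by
        rw [PP_ge v (by omega), PP_ge v (by omega)]
      rw [h1]
      omega

lemma hh_mod (hE : edgeBdry d U1 ∩ edgeBdry d U2 = ∅) (v : Fin d → ℤ) :
    (hh U1 U2 v - cell U1 U2 v) % 4 = 0 := by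
  have := FF_mod hE (U1 := U1) (U2 := U2) d v
  rwa [PP_ge v le_rfl] at this


/-! ### lattice connectivity -/

lemma reach_upd_nat (v : Fin d → ℤ) (i : Fin d) (n : ℕ) :
    (latticeGraph d).Reachable v (Function.update v i (v i + n)) ∧
    (latticeGraph d).Reachable v (Function.update v i (v i - n)) := by
  induction n with
  | zero =>
    refine ⟨?_, ?_⟩ <;>
      · simp only [Nat.cast_zero, add_zero, sub_zero, Function.update_eq_self]
        exact SimpleGraph.Reachable.refl v
  | succ n ih =>
    constructor
    · refine ih.1.trans (SimpleGraph.Adj.reachable ?_)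
      have h := adj_upd v i (v i + n)
      rwa [show (v i + (n : ℤ)) + 1 = v i + ((n + 1 : ℕ) : ℤ) from by push_cast; ring] at h
    · refine ih.2.trans (SimpleGraph.Adj.reachable ?_)
      have h := (adj_upd v i (v i - ((n + 1 : ℕ) : ℤ))).symm
      rwa [show (v i - ((n + 1 : ℕ) : ℤ)) + 1 = v i - (n : ℤ) from by push_cast; ring] at h

lemma reach_upd (v : Fin d → ℤ) (i : Fin d) (t : ℤ) :
    (latticeGraph d).Reachable v (Function.update v i t) := by
  rcases le_or_gt (v i) t with ht | ht
  · have := (reach_upd_nat v i (t - v i).toNat).1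
    rwa [show (v i + ((t - v i).toNat : ℤ)) = t from by omega] at this
  · have := (reach_upd_nat v i (v i - t).toNat).2
    rwa [show (v i - ((v i - t).toNat : ℤ)) = t from by omega] at this

lemma reach_aux (w : Fin d → ℤ) : ∀ k : ℕ, ∀ v : Fin d → ℤ,
    (∀ i : Fin d, k ≤ (i : ℕ) → v i = w i) → (latticeGraph d).Reachable v w := by
  intro k
  induction k with
  | zero =>
    intro v hvw
    have : v = w := funext fun i => hvw i (Nat.zero_le _)
    rw [this]
  | succ k ih =>
    intro v hvw
    by_cases hk : k < d
    · refine (reach_upd v ⟨k, hk⟩ (w ⟨k, hk⟩)).trans (ih _ ?_)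
      intro j hj
      rcases eq_or_ne j (⟨k, hk⟩ : Fin d) with rfl | hne
      · rw [Function.update_self]
      · rw [Function.update_of_ne hne]
        refine hvw j ?_
        have : (j : ℕ) ≠ k := fun h => hne (Fin.ext h)
        omega
    · exact ih v fun j hj => hvw j (by omega)

lemma lattice_reach (v w : Fin d → ℤ) : (latticeGraph d).Reachable v w :=
  reach_aux w d v (fun i hi => absurd i.isLt (by omega))

lemma crossing_walk {S : Set (Fin d → ℤ)} {x y : Fin d → ℤ}
    (w : (latticeGraph d).Walk x y) :
    x ∈ S → y ∉ S → ∃ p q, (latticeGraph d).Adj p q ∧ p ∈ S ∧ q ∉ S := by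
  induction w with
  | nil => intro hx hy; exact absurd hx hy
  | @cons u v _ h p ih =>
    intro hx hy
    by_cases hv : v ∈ S
    · exact ih hv hy
    · exact ⟨u, v, h, hx, hv⟩

lemma crossing {S : Set (Fin d → ℤ)} {x y : Fin d → ℤ} (hx : x ∈ S) (hy : y ∉ S) :
    ∃ p q, (latticeGraph d).Adj p q ∧ p ∈ S ∧ q ∉ S := by
  obtain ⟨wlk⟩ := lattice_reach x y
  exact crossing_walk wlk hx hy


/-! ### constancy along connected subsets -/

lemma walk_const {S : Set (Fin d → ℤ)} (g : (Fin d → ℤ) → ℤ)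
    (hstep : ∀ x y, x ∈ S → y ∈ S → (latticeGraph d).Adj x y → g x = g y) :
    ∀ {x y : ↥S} (_ : ((latticeGraph d).induce S).Walk x y), g x.1 = g y.1 := by
  intro x y w
  induction w with
  | nil => rfl
  | @cons u v _ h p ih =>
    have hadj : (latticeGraph d).Adj u.1 v.1 := by simpa using h
    exact (hstep u.1 v.1 u.2 v.2 hadj).trans ih

lemma const_of_connectedIn {S : Set (Fin d → ℤ)} (hS : ConnectedIn (latticeGraph d) S)
    (g : (Fin d → ℤ) → ℤ)
    (hstep : ∀ x y, x ∈ S → y ∈ S → (latticeGraph d).Adj x y → g x = g y)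
    {a b : Fin d → ℤ} (ha : a ∈ S) (hb : b ∈ S) : g a = g b := by
  obtain ⟨w⟩ := hS.preconnected ⟨a, ha⟩ ⟨b, hb⟩
  exact walk_const g hstep w

lemma cell_of_mem1 {v : Fin d → ℤ} (h : v ∈ U1) : cell U1 U2 v = 2 ∨ cell U1 U2 v = 3 := by
  unfold cell; rw [if_pos h]; split_ifs <;> simp

lemma cell_of_not1 {v : Fin d → ℤ} (h : v ∉ U1) : cell U1 U2 v = 0 ∨ cell U1 U2 v = 1 := by
  unfold cell; rw [if_neg h]; split_ifs <;> simp

lemma cell_of_mem2 {v : Fin d → ℤ} (h : v ∈ U2) : cell U1 U2 v = 1 ∨ cell U1 U2 v = 2 := by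
  unfold cell; split_ifs <;> simp_all

lemma cell_of_not2 {v : Fin d → ℤ} (h : v ∉ U2) : cell U1 U2 v = 0 ∨ cell U1 U2 v = 3 := by
  unfold cell; split_ifs <;> simp_all

/-! ### the main contradiction -/

lemma main_contra (hbd : BoundaryDisjoint d U1 U2)
    (hc1 : ConnectedIn (latticeGraph d) U1) (hc1c : ConnectedIn (latticeGraph d) U1ᶜ)
    (hc2 : ConnectedIn (latticeGraph d) U2) (hc2c : ConnectedIn (latticeGraph d) U2ᶜ)
    {p11 p10 p01 p00 : Fin d → ℤ}
    (h11 : p11 ∈ U1 ∧ p11 ∈ U2) (h10 : p10 ∈ U1 ∧ p10 ∉ U2)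
    (h01 : p01 ∉ U1 ∧ p01 ∈ U2) (h00 : p00 ∉ U1 ∧ p00 ∉ U2) : False := by
  have c11 : cell U1 U2 p11 = 2 := by simp [cell, h11.1, h11.2]
  have c10 : cell U1 U2 p10 = 3 := by simp [cell, h10.1, h10.2]
  have c01 : cell U1 U2 p01 = 1 := by simp [cell, h01.1, h01.2]
  have c00 : cell U1 U2 p00 = 0 := by simp [cell, h00.1, h00.2]
  have m11 := hh_mod hbd.1 p11; rw [c11] at m11
  have m10 := hh_mod hbd.1 p10; rw [c10] at m10
  have m01 := hh_mod hbd.1 p01; rw [c01] at m01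
  have m00 := hh_mod hbd.1 p00; rw [c00] at m00
  have E1 : (hh U1 U2 p11 - 2) / 4 = (hh U1 U2 p10 - 2) / 4 := by
    refine const_of_connectedIn hc1 (fun v => (hh U1 U2 v - 2) / 4) ?_ h11.1 h10.1
    intro x y hx hy hadj
    have hd := hh_adj hbd hadj
    have hbnd := del_bound (U1 := U1) (U2 := U2) x y
    have mx := hh_mod hbd.1 x
    have my := hh_mod hbd.1 y
    rcases cell_of_mem1 (U2 := U2) hx with hcx | hcx <;>
      rcases cell_of_mem1 (U2 := U2) hy with hcy | hcy <;> rw [hcx] at mx <;>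
      rw [hcy] at my <;> omega
  have E2 : hh U1 U2 p01 / 4 = hh U1 U2 p00 / 4 := by
    refine const_of_connectedIn hc1c (fun v => hh U1 U2 v / 4) ?_ h01.1 h00.1
    intro x y hx hy hadj
    have hd := hh_adj hbd hadj
    have hbnd := del_bound (U1 := U1) (U2 := U2) x y
    have mx := hh_mod hbd.1 x
    have my := hh_mod hbd.1 y
    rcases cell_of_not1 (U2 := U2) hx with hcx | hcx <;>
      rcases cell_of_not1 (U2 := U2) hy with hcy | hcy <;> rw [hcx] at mx <;>
      rw [hcy] at my <;> omega
  have E3 : (hh U1 U2 p11 - 1) / 4 = (hh U1 U2 p01 - 1) / 4 := by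
    refine const_of_connectedIn hc2 (fun v => (hh U1 U2 v - 1) / 4) ?_ h11.2 h01.2
    intro x y hx hy hadj
    have hd := hh_adj hbd hadj
    have hbnd := del_bound (U1 := U1) (U2 := U2) x y
    have mx := hh_mod hbd.1 x
    have my := hh_mod hbd.1 y
    rcases cell_of_mem2 (U1 := U1) hx with hcx | hcx <;>
      rcases cell_of_mem2 (U1 := U1) hy with hcy | hcy <;> rw [hcx] at mx <;>
      rw [hcy] at my <;> omega
  have E4 : (hh U1 U2 p10 - 3) / 4 = (hh U1 U2 p00 - 3) / 4 := by
    refine const_of_connectedIn hc2c (fun v => (hh U1 U2 v - 3) / 4) ?_ h10.2 h00.2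
    intro x y hx hy hadj
    have hd := hh_adj hbd hadj
    have hbnd := del_bound (U1 := U1) (U2 := U2) x y
    have mx := hh_mod hbd.1 x
    have my := hh_mod hbd.1 y
    rcases cell_of_not2 (U1 := U1) hx with hcx | hcx <;>
      rcases cell_of_not2 (U1 := U1) hy with hcy | hcy <;> rw [hcx] at mx <;>
      rw [hcy] at my <;> omega
  omega

end Stmt8Aux

theorem stmt8 (d : ℕ) (U1 U2 : Set (Fin d → ℤ))
    (h1 : P3C.BiConnected d U1) (h2 : P3C.BiConnected d U2)
    (hbd : P3C.BoundaryDisjoint d U1 U2) :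
    (U1 ∩ U2 = ∅ ∧ ¬(U1ᶜ ∩ U2ᶜ = ∅) ∧ ¬(U1 ⊂ U2 ∨ U2 ⊂ U1)) ∨
    (¬(U1 ∩ U2 = ∅) ∧ U1ᶜ ∩ U2ᶜ = ∅ ∧ ¬(U1 ⊂ U2 ∨ U2 ⊂ U1)) ∨
    (¬(U1 ∩ U2 = ∅) ∧ ¬(U1ᶜ ∩ U2ᶜ = ∅) ∧ (U1 ⊂ U2 ∨ U2 ⊂ U1)) := by
  classical
  open Stmt8Aux in
  obtain ⟨hne1, hnu1, hc1, hc1c⟩ := h1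
  obtain ⟨hne2, hnu2, hc2, hc2c⟩ := h2
  by_cases hA : U1 ∩ U2 = ∅
  · left
    refine ⟨hA, ?_, ?_⟩
    · intro hB
      obtain ⟨x, hx⟩ := Set.nonempty_iff_ne_empty.mpr hne1
      have hy : ∃ y, y ∉ U1 := by
        by_contra hc; push_neg at hc; exact hnu1 (Set.eq_univ_iff_forall.mpr hc)
      obtain ⟨y, hy⟩ := hy
      obtain ⟨p, q, hpq, hp, hq⟩ := Stmt8Aux.crossing hx hy
      have hq2 : q ∈ U2 := by
        by_contra hq2
        exact Set.eq_empty_iff_forall_notMem.mp hB q ⟨hq, hq2⟩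
      have hp2 : p ∉ U2 := fun hp2 => Set.eq_empty_iff_forall_notMem.mp hA p ⟨hp, hp2⟩
      exact Set.eq_empty_iff_forall_notMem.mp hbd.1 (p, q)
        ⟨⟨hpq, Or.inl ⟨hp, hq⟩⟩, ⟨hpq, Or.inr ⟨hq2, hp2⟩⟩⟩
    · rintro (hsub | hsub)
      · obtain ⟨x, hx⟩ := Set.nonempty_iff_ne_empty.mpr hne1
        exact Set.eq_empty_iff_forall_notMem.mp hA x ⟨hx, hsub.subset hx⟩
      · obtain ⟨x, hx⟩ := Set.nonempty_iff_ne_empty.mpr hne2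
        exact Set.eq_empty_iff_forall_notMem.mp hA x ⟨hsub.subset hx, hx⟩
  · by_cases hB : U1ᶜ ∩ U2ᶜ = ∅
    · right; left
      refine ⟨hA, hB, ?_⟩
      rintro (hsub | hsub)
      · apply hnu2
        apply Set.eq_univ_iff_forall.mpr
        intro x
        by_contra hx2
        have hx1 : x ∈ U1 := by
          by_contra hx1
          exact Set.eq_empty_iff_forall_notMem.mp hB x ⟨hx1, hx2⟩
        exact hx2 (hsub.subset hx1)
      · apply hnu1
        apply Set.eq_univ_iff_forall.mpr
        intro x
        by_contra hx1
        have hx2 : x ∈ U2 := by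
          by_contra hx2
          exact Set.eq_empty_iff_forall_notMem.mp hB x ⟨hx1, hx2⟩
        exact hx1 (hsub.subset hx2)
    · right; right
      refine ⟨hA, hB, ?_⟩
      by_contra hC
      push_neg at hC
      obtain ⟨hC1, hC2⟩ := hC
      obtain ⟨p11, hp11⟩ := Set.nonempty_iff_ne_empty.mpr hA
      obtain ⟨p00, hp00⟩ := Set.nonempty_iff_ne_empty.mpr hB
      by_cases heq : U1 = U2
      · obtain ⟨p, q, hpq, hp, hq⟩ :=
          Stmt8Aux.crossing (show p11 ∈ U1 from hp11.1) (show p00 ∉ U1 from hp00.1)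
        exact Set.eq_empty_iff_forall_notMem.mp hbd.1 (p, q)
          ⟨⟨hpq, Or.inl ⟨hp, hq⟩⟩, ⟨hpq, Or.inl ⟨heq ▸ hp, heq ▸ hq⟩⟩⟩
      · have h10 : ∃ x, x ∈ U1 ∧ x ∉ U2 := by
          by_contra hc
          push_neg at hc
          exact hC1 (Set.ssubset_iff_subset_ne.mpr ⟨hc, heq⟩)
        have h01 : ∃ x, x ∉ U1 ∧ x ∈ U2 := by
          by_contra hc
          push_neg at hc
          have hsub : U2 ⊆ U1 := fun x hx => by
            by_contra hx1
            exact (hc x hx1) hx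
          exact hC2 (Set.ssubset_iff_subset_ne.mpr ⟨hsub, Ne.symm heq⟩)
        obtain ⟨p10, h10a, h10b⟩ := h10
        obtain ⟨p01, h01a, h01b⟩ := h01
        exact (Stmt8Aux.main_contra hbd hc1 hc1c hc2 hc2c ⟨hp11.1, hp11.2⟩ ⟨h10a, h10b⟩
          ⟨h01a, h01b⟩ ⟨hp00.1, hp00.2⟩).elim
end

section
/- If U1, U2 ⊆ ℤ^d are non-empty, boundary disjoint sets with U1 ⊆ U2, then for every non-empty set V ⊆ ℤ^d with V ∩ U2 = ∅ one has dist(U1, V) > dist(U2, V). -/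
lemma lattice_reachable (d : ℕ) (v w : Fin d → ℤ) : (P3C.latticeGraph d).Reachable v w := by
  generalize hn : (∑ i, (w i - v i).natAbs) = n
  induction n generalizing v with
  | zero =>
    have hv : v = w := by
      funext i
      have := (Finset.sum_eq_zero_iff.mp hn) i (Finset.mem_univ i)
      omega
    exact hv ▸ SimpleGraph.Reachable.refl v
  | succ n ih =>
    have hex : ∃ i, (w i - v i).natAbs ≠ 0 := by
      by_contra hc
      push_neg at hc
      simp [Finset.sum_eq_zero (fun i _ => hc i)] at hn
    obtain ⟨i, hi⟩ := hex
    set v' : Fin d → ℤ := Function.update v i (if v i < w i then v i + 1 else v i - 1) with hv'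
    have hadj : (P3C.latticeGraph d).Adj v v' := by
      refine ⟨i, ?_, fun j hj => by simp [hv', Function.update_of_ne hj]⟩
      simp only [hv', Function.update_self]
      split <;> simp
    have hsum : (∑ j, (w j - v' j).natAbs) = n := by
      have h1 : ∀ j, j ≠ i → (w j - v' j).natAbs = (w j - v j).natAbs := by
        intro j hj; simp [hv', Function.update_of_ne hj]
      have h2 : (w i - v' i).natAbs + 1 = (w i - v i).natAbs := by
        simp only [hv', Function.update_self]
        split <;> omega
      have e1 : (∑ j, (w j - v' j).natAbs)
          = (w i - v' i).natAbs + ∑ j ∈ Finset.univ.erase i, (w j - v' j).natAbs :=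
        (Finset.add_sum_erase _ _ (Finset.mem_univ i)).symm
      have e2 : (∑ j, (w j - v j).natAbs)
          = (w i - v i).natAbs + ∑ j ∈ Finset.univ.erase i, (w j - v j).natAbs :=
        (Finset.add_sum_erase _ _ (Finset.mem_univ i)).symm
      have e3 : ∑ j ∈ Finset.univ.erase i, (w j - v' j).natAbs
          = ∑ j ∈ Finset.univ.erase i, (w j - v j).natAbs :=
        Finset.sum_congr rfl (fun j hj => h1 j (Finset.ne_of_mem_erase hj))
      omega
    exact hadj.reachable.trans (ih v' hsum)

theorem stmt9 (d : ℕ) (U1 U2 V : Set (Fin d → ℤ))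
    (h1 : U1.Nonempty) (h2 : U2.Nonempty)
    (hbd : P3C.BoundaryDisjoint d U1 U2) (hsub : U1 ⊆ U2)
    (hV : V.Nonempty) (hdisj : V ∩ U2 = ∅) :
    P3C.setDist d U2 V < P3C.setDist d U1 V := by
  classical
  obtain ⟨a0, ha0⟩ := h1
  obtain ⟨b0, hb0⟩ := hV
  have hS1ne : {k | ∃ a ∈ U1, ∃ b ∈ V, (P3C.latticeGraph d).dist a b = k}.Nonempty :=
    ⟨_, a0, ha0, b0, hb0, rfl⟩
  obtain ⟨a, ha, b, hb, hab⟩ := Nat.sInf_mem hS1ne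
  have hreach : (P3C.latticeGraph d).Reachable a b := lattice_reachable d a b
  have hane : a ≠ b := by
    rintro rfl
    have : a ∈ V ∩ U2 := ⟨hb, hsub ha⟩
    rw [hdisj] at this
    exact this
  have hLpos : 0 < (P3C.latticeGraph d).dist a b :=
    Nat.pos_of_ne_zero (fun h0 => hane (hreach.dist_eq_zero_iff.mp h0))
  obtain ⟨p, hp⟩ := hreach.exists_walk_length_eq_dist
  cases p with
  | nil => exact absurd rfl hane
  | cons hadj q =>
    rename_i c
    have hc2 : c ∈ U2 := by
      by_contra hc
      have hc1 : c ∉ U1 := fun h => hc (hsub h)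
      have : (a, c) ∈ P3C.edgeBdry d U1 ∩ P3C.edgeBdry d U2 :=
        ⟨⟨hadj, Or.inl ⟨ha, hc1⟩⟩, ⟨hadj, Or.inl ⟨hsub ha, hc⟩⟩⟩
      rw [hbd.1] at this
      exact this
    have hd2 : P3C.setDist d U2 V ≤ (P3C.latticeGraph d).dist c b :=
      Nat.sInf_le ⟨c, hc2, b, hb, rfl⟩
    have hdcb : (P3C.latticeGraph d).dist c b ≤ q.length := SimpleGraph.dist_le q
    have hlen : q.length + 1 = (P3C.latticeGraph d).dist a b := by
      simpa using hp
    have : P3C.setDist d U1 V = (P3C.latticeGraph d).dist a b := hab.symm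
    omega
end

section
/- Let n ≥ 2 be an integer and let U, V ⊆ ℤ^d be translation respecting sets with |T_U| > 1, |T_V| > 1 and U ⊆ V. Then: (a) if the complements of any two distinct members of T_U are disjoint, then the complements of any two distinct members of T_V are disjoint; and (b) if any two distinct members of T_V are disjoint, then any two distinct members of T_U are disjoint. -/
namespace Aux
open P3C

variable {d : ℕ}

abbrev Pt (d : ℕ) := Fin d → ℤ

def τ (x : Pt d) (S : Set (Pt d)) : Set (Pt d) := (fun u => u + x) '' S

lemma mem_τ {x : Pt d} {S : Set (Pt d)} {v : Pt d} : v ∈ τ x S ↔ v - x ∈ S := by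
  constructor
  · rintro ⟨u, hu, rfl⟩; simpa using hu
  · intro h; exact ⟨v - x, h, sub_add_cancel v x⟩

lemma τ_compl (x : Pt d) (S : Set (Pt d)) : (τ x S)ᶜ = τ x Sᶜ := by
  ext v; simp [mem_τ]

lemma τ_mono (x : Pt d) {S T : Set (Pt d)} (h : S ⊆ T) : τ x S ⊆ τ x T := by
  intro v hv; rw [mem_τ] at *; exact h hv

lemma τ_τ (x y : Pt d) (S : Set (Pt d)) : τ x (τ y S) = τ (x + y) S := by
  ext v; rw [mem_τ, mem_τ, mem_τ, sub_sub]

lemma τ_zero (S : Set (Pt d)) : τ 0 S = S := by ext v; simp [mem_τ]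

lemma τ_univ (x : Pt d) : τ x (Set.univ : Set (Pt d)) = Set.univ := by
  ext v; simp [mem_τ]

lemma τ_empty (x : Pt d) : τ x (∅ : Set (Pt d)) = ∅ := by ext v; simp [mem_τ]

lemma τ_eq_univ {x : Pt d} {S : Set (Pt d)} (h : τ x S = Set.univ) : S = Set.univ := by
  have := congrArg (τ (-x)) h
  rwa [τ_τ, neg_add_cancel, τ_zero, τ_univ] at this

lemma τ_eq_empty {x : Pt d} {S : Set (Pt d)} (h : τ x S = ∅) : S = ∅ := by
  have := congrArg (τ (-x)) h
  rwa [τ_τ, neg_add_cancel, τ_zero, τ_empty] at this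

lemma τ_cancel {x : Pt d} {S T : Set (Pt d)} (h : τ x S = τ x T) : S = T := by
  have := congrArg (τ (-x)) h
  rwa [τ_τ, τ_τ, neg_add_cancel, τ_zero, τ_zero] at this

lemma adj_translate {x u v : Pt d} :
    (latticeGraph d).Adj (u + x) (v + x) ↔ (latticeGraph d).Adj u v := by
  constructor <;> rintro ⟨i, h1, h2⟩ <;> refine ⟨i, ?_, ?_⟩
  · simp only [Pi.add_apply] at h1; omega
  · intro j hj; have := h2 j hj; simp only [Pi.add_apply] at this ⊢; omega
  · simp only [Pi.add_apply]; omega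
  · intro j hj; have := h2 j hj; simp only [Pi.add_apply]; omega

lemma connectedIn_τ {S : Set (Pt d)} (x : Pt d) (h : ConnectedIn (latticeGraph d) S) :
    ConnectedIn (latticeGraph d) (τ x S) := by
  unfold ConnectedIn at *
  have e : ((latticeGraph d).induce S) ≃g ((latticeGraph d).induce (τ x S)) := by
    refine ⟨Equiv.subtypeEquiv (Equiv.addRight x) (fun a => ?_), ?_⟩
    · simp only [Equiv.coe_addRight, mem_τ, add_sub_cancel_right]
    · intro a b
      simp only [Equiv.subtypeEquiv_apply, SimpleGraph.comap_adj, Function.Embedding.coe_subtype,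
        Equiv.coe_addRight]
      exact adj_translate
  exact e.connected_iff.mp h

lemma edgeBdry_compl (S : Set (Pt d)) : edgeBdry d Sᶜ = edgeBdry d S := by
  ext p; unfold edgeBdry; simp only [Set.mem_setOf_eq, Set.mem_compl_iff]
  tauto

lemma vplus_mono {S T : Set (Pt d)} (h : S ⊆ T) : vplus d S ⊆ vplus d T := by
  rintro v (hv | ⟨w, hw, ha⟩)
  · exact Or.inl (h hv)
  · exact Or.inr ⟨w, h hw, ha⟩

lemma subset_vplus (S : Set (Pt d)) : S ⊆ vplus d S := fun v hv => Or.inl hv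

lemma vplus_subset_of_nested {S T : Set (Pt d)} (hST : S ⊆ T)
    (hbd : edgeBdry d S ∩ edgeBdry d T = ∅) : vplus d S ⊆ T := by
  rintro v (hv | ⟨w, hw, ha⟩)
  · exact hST hv
  · by_contra hvT
    have hvS : v ∉ S := fun h => hvT (hST h)
    have h1 : (v, w) ∈ edgeBdry d S := ⟨ha, Or.inr ⟨hw, hvS⟩⟩
    have h2 : (v, w) ∈ edgeBdry d T := ⟨ha, Or.inr ⟨hST hw, hvT⟩⟩
    exact absurd (Set.eq_empty_iff_forall_notMem.mp hbd (v, w)) (by simp [h1, h2])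


def nrm (v : Pt d) : ℕ := ∑ i, (v i).natAbs

lemma nrm_split (v : Pt d) (j : Fin d) :
    nrm v = (v j).natAbs + ∑ i ∈ Finset.univ.erase j, (v i).natAbs :=
  (Finset.add_sum_erase _ _ (Finset.mem_univ j)).symm

lemma nrm_agree {v w : Pt d} (j : Fin d) (h : ∀ i, i ≠ j → v i = w i) :
    nrm v + (w j).natAbs = nrm w + (v j).natAbs := by
  rw [nrm_split v j, nrm_split w j]
  have : ∑ i ∈ Finset.univ.erase j, (v i).natAbs
      = ∑ i ∈ Finset.univ.erase j, (w i).natAbs := by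
    apply Finset.sum_congr rfl
    intro i hi
    rw [h i (Finset.ne_of_mem_erase hi)]
  omega

lemma adj_step (v : Pt d) (i : Fin d) (s : ℤ) (hs : s = 1 ∨ s = -1) :
    (latticeGraph d).Adj v (v + Pi.single i s) := by
  refine ⟨i, ?_, ?_⟩
  · simp only [Pi.add_apply, Pi.single_eq_same]; omega
  · intro j hj; simp [Pi.single_eq_of_ne hj]

lemma adj_iff {v w : Pt d} : (latticeGraph d).Adj v w ↔
    ∃ i, ((w i - v i).natAbs = 1) ∧ ∀ j, j ≠ i → w j = v j := by
  constructor <;> rintro ⟨i, h1, h2⟩ <;> exact ⟨i, by omega, h2⟩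

lemma reach (S : Set (Pt d)) (a : Pt d) (ha : a ∈ S) :
    ∀ (m : ℕ) (v : Pt d), (∑ i, (v i - a i).natAbs) = m → v ∈ (vplus d)^[m] S := by
  intro m
  induction m with
  | zero =>
    intro v hv
    have : v = a := by
      funext i
      have := Finset.sum_eq_zero_iff.mp hv i (Finset.mem_univ i)
      omega
    simpa [this] using ha
  | succ m ih =>
    intro v hv
    have hex : ∃ i, v i ≠ a i := by
      by_contra hno
      push_neg at hno
      have : (∑ i, (v i - a i).natAbs) = 0 :=
        Finset.sum_eq_zero (fun i _ => by rw [hno i]; simp)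
      omega
    obtain ⟨i, hi⟩ := hex
    set s : ℤ := if a i < v i then 1 else -1 with hs
    set v' : Pt d := v - Pi.single i s with hv'
    have hv'i : v' i = v i - s := by simp [hv']
    have hoff : ∀ j, j ≠ i → v' j = v j := by
      intro j hj; simp [hv', Pi.single_eq_of_ne hj]
    have hsum : (∑ k, (v' k - a k).natAbs) = m := by
      have e1 : ∑ k, (v' k - a k).natAbs
          = (v' i - a i).natAbs + ∑ k ∈ Finset.univ.erase i, (v' k - a k).natAbs :=
        (Finset.add_sum_erase _ _ (Finset.mem_univ i)).symm
      have e2 : ∑ k, (v k - a k).natAbs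
          = (v i - a i).natAbs + ∑ k ∈ Finset.univ.erase i, (v k - a k).natAbs :=
        (Finset.add_sum_erase _ _ (Finset.mem_univ i)).symm
      have e3 : ∑ k ∈ Finset.univ.erase i, (v' k - a k).natAbs
          = ∑ k ∈ Finset.univ.erase i, (v k - a k).natAbs :=
        Finset.sum_congr rfl (fun k hk => by rw [hoff k (Finset.ne_of_mem_erase hk)])
      have e4 : (v' i - a i).natAbs + 1 = (v i - a i).natAbs := by
        rw [hv'i]; split_ifs at hs <;> omega
      omega
    have hmem : v' ∈ (vplus d)^[m] S := ih v' hsum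
    have hadj : (latticeGraph d).Adj v v' := by
      have : v' = v + Pi.single i (-s) := by
        rw [hv']; funext k; by_cases hk : k = i
        · subst hk; simp [sub_eq_add_neg]
        · simp [Pi.single_eq_of_ne hk]
      rw [this]
      exact adj_step v i (-s) (by split_ifs at hs <;> omega)
    rw [Function.iterate_succ_apply']
    exact Or.inr ⟨v', hmem, hadj⟩


section Code

open scoped Classical

variable (A B : Set (Pt d))

noncomputable def code (v : Pt d) : ZMod 4 :=
  if v ∈ A then (if v ∈ B then 2 else 3) else (if v ∈ B then 1 else 0)

noncomputable def del (u v : Pt d) : ℤ :=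
  if code A B v - code A B u = 1 then 1
  else if code A B v - code A B u = 3 then -1 else 0

variable {A B}

lemma code_eq_zero {v : Pt d} : code A B v = 0 ↔ v ∉ A ∧ v ∉ B := by
  unfold code; split_ifs with h1 h2 h3 <;> simp_all <;> decide

lemma code_eq_one {v : Pt d} : code A B v = 1 ↔ v ∉ A ∧ v ∈ B := by
  unfold code; split_ifs with h1 h2 h3 <;> simp_all <;> decide

lemma code_eq_two {v : Pt d} : code A B v = 2 ↔ v ∈ A ∧ v ∈ B := by
  unfold code; split_ifs with h1 h2 h3 <;> simp_all <;> decide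

lemma code_eq_three {v : Pt d} : code A B v = 3 ↔ v ∈ A ∧ v ∉ B := by
  unfold code; split_ifs with h1 h2 h3 <;> simp_all <;> decide

lemma zmod4_cases (t : ZMod 4) : t = 0 ∨ t = 1 ∨ t = 2 ∨ t = 3 := by revert t; decide

lemma del_bounds (u v : Pt d) : -1 ≤ del A B u v ∧ del A B u v ≤ 1 := by
  unfold del; split_ifs <;> omega

lemma del_antisymm (u v : Pt d) : del A B v u = - del A B u v := by
  have hneg : code A B u - code A B v = -(code A B v - code A B u) := by ring
  unfold del
  rcases zmod4_cases (code A B v - code A B u) with h | h | h | h <;>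
    rw [hneg, h] <;> norm_num <;> decide

lemma code_diff_ne_two (hbd : BoundaryDisjoint d A B) {u v : Pt d}
    (hadj : (latticeGraph d).Adj u v) : code A B v - code A B u ≠ 2 := by
  intro hdiff
  have hA : (u ∈ A ∧ v ∉ A) ∨ (v ∈ A ∧ u ∉ A) := by
    by_cases h1 : u ∈ A <;> by_cases h2 : v ∈ A <;> by_cases h3 : u ∈ B <;>
      by_cases h4 : v ∈ B <;> simp [code, h1, h2, h3, h4] at hdiff <;> tauto
  have hB : (u ∈ B ∧ v ∉ B) ∨ (v ∈ B ∧ u ∉ B) := by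
    by_cases h1 : u ∈ A <;> by_cases h2 : v ∈ A <;> by_cases h3 : u ∈ B <;>
      by_cases h4 : v ∈ B <;> simp [code, h1, h2, h3, h4] at hdiff <;> tauto
  have e1 : (u, v) ∈ edgeBdry d A := ⟨hadj, hA⟩
  have e2 : (u, v) ∈ edgeBdry d B := ⟨hadj, hB⟩
  exact absurd (Set.eq_empty_iff_forall_notMem.mp hbd.1 (u, v)) (by simp [e1, e2])

lemma del_cast (hbd : BoundaryDisjoint d A B) {u v : Pt d}
    (hadj : (latticeGraph d).Adj u v) :
    ((del A B u v : ℤ) : ZMod 4) = code A B v - code A B u := by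
  have hne := code_diff_ne_two hbd hadj
  unfold del
  rcases zmod4_cases (code A B v - code A B u) with h | h | h | h
  · rw [h]; decide
  · rw [h]; decide
  · exact absurd h hne
  · rw [h]; decide

lemma fourCycle_rot {v0 v1 v2 v3 : Pt d} (h : IsFourCycle d v0 v1 v2 v3) :
    IsFourCycle d v3 v0 v1 v2 :=
  ⟨h.2.2.2.1, h.1, h.2.1, h.2.2.1, h.2.2.2.2.2.symm, h.2.2.2.2.1⟩

lemma noWind0 (hbd : BoundaryDisjoint d A B) {v0 v1 v2 v3 : Pt d}
    (hc : IsFourCycle d v0 v1 v2 v3)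
    (h0 : code A B v0 = 0) (h1 : code A B v1 = 1)
    (h2 : code A B v2 = 2) (h3 : code A B v3 = 3) : False := by
  obtain ⟨ha0, hb0⟩ := code_eq_zero.mp h0
  obtain ⟨ha1, hb1⟩ := code_eq_one.mp h1
  obtain ⟨ha2, hb2⟩ := code_eq_two.mp h2
  obtain ⟨ha3, hb3⟩ := code_eq_three.mp h3
  exact hbd.2 ⟨v0, v1, v2, v3, hc, ⟨ha0, hb0⟩, ⟨ha1, hb1⟩, ⟨ha2, hb2⟩, ⟨ha3, hb3⟩⟩

lemma noWind (hbd : BoundaryDisjoint d A B) {v0 v1 v2 v3 : Pt d}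
    (hc : IsFourCycle d v0 v1 v2 v3)
    (h1 : code A B v1 = code A B v0 + 1)
    (h2 : code A B v2 = code A B v0 + 2)
    (h3 : code A B v3 = code A B v0 + 3) : False := by
  rcases zmod4_cases (code A B v0) with h0 | h0 | h0 | h0
  · exact noWind0 hbd hc (by rw [h0]) (by rw [h1, h0]; decide) (by rw [h2, h0]; decide)
      (by rw [h3, h0]; decide)
  · exact noWind0 hbd (fourCycle_rot hc) (by rw [h3, h0]; decide) (by rw [h0])
      (by rw [h1, h0]; decide) (by rw [h2, h0]; decide)
  · exact noWind0 hbd (fourCycle_rot (fourCycle_rot hc)) (by rw [h2, h0]; decide)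
      (by rw [h3, h0]; decide) (by rw [h0]) (by rw [h1, h0]; decide)
  · exact noWind0 hbd (fourCycle_rot (fourCycle_rot (fourCycle_rot hc)))
      (by rw [h1, h0]; decide) (by rw [h2, h0]; decide) (by rw [h3, h0]; decide) (by rw [h0])

lemma code_of_del (hbd : BoundaryDisjoint d A B) {u v : Pt d}
    (hadj : (latticeGraph d).Adj u v) {t : ℤ} (ht : del A B u v = t) :
    code A B v = code A B u + (t : ZMod 4) := by
  have h2 := del_cast hbd hadj
  rw [ht] at h2
  linear_combination -h2

lemma squareEq (hbd : BoundaryDisjoint d A B) {a b c e : Pt d}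
    (h1 : (latticeGraph d).Adj a b) (h2 : (latticeGraph d).Adj b c)
    (h3 : (latticeGraph d).Adj c e) (h4 : (latticeGraph d).Adj e a)
    (h5 : a ≠ c) (h6 : b ≠ e) :
    del A B a b + del A B b c = del A B a e + del A B e c := by
  have c1 := del_cast hbd h1
  have c2 := del_cast hbd h2
  have c3 := del_cast hbd h4.symm
  have c4 := del_cast hbd h3.symm
  have hsum : ((del A B a b + del A B b c - (del A B a e + del A B e c) : ℤ) : ZMod 4) = 0 := by
    push_cast
    rw [c1, c2, c3, c4]; ring
  have hdvd : (4 : ℤ) ∣ del A B a b + del A B b c - (del A B a e + del A B e c) :=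
    (ZMod.intCast_zmod_eq_zero_iff_dvd _ 4).mp hsum
  have b1 := del_bounds (A := A) (B := B) a b
  have b2 := del_bounds (A := A) (B := B) b c
  have b3 := del_bounds (A := A) (B := B) a e
  have b4 := del_bounds (A := A) (B := B) e c
  have hcases : del A B a b + del A B b c - (del A B a e + del A B e c) = 4 ∨
      del A B a b + del A B b c - (del A B a e + del A B e c) = 0 ∨
      del A B a b + del A B b c - (del A B a e + del A B e c) = -4 := by omega
  rcases hcases with hca | hca | hca
  · exfalso
    have e1 : del A B a b = 1 := by omega
    have e2 : del A B b c = 1 := by omega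
    have e3 : del A B a e = -1 := by omega
    refine noWind hbd ⟨h1, h2, h3, h4, h5, h6⟩ ?_ ?_ ?_
    · rw [code_of_del hbd h1 e1, show ((1 : ℤ) : ZMod 4) = 1 from by decide]
    · rw [code_of_del hbd h2 e2, code_of_del hbd h1 e1,
        show ((1 : ℤ) : ZMod 4) = 1 from by decide]
      ring
    · rw [code_of_del hbd h4.symm e3, show ((-1 : ℤ) : ZMod 4) = 3 from by decide]
  · omega
  · exfalso
    have e1 : del A B a b = -1 := by omega
    have e2 : del A B b c = -1 := by omega
    have e3 : del A B a e = 1 := by omega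
    have e4 : del A B e c = 1 := by omega
    refine noWind hbd ⟨h4.symm, h3.symm, h2.symm, h1.symm, h5, h6.symm⟩ ?_ ?_ ?_
    · rw [code_of_del hbd h4.symm e3, show ((1 : ℤ) : ZMod 4) = 1 from by decide]
    · rw [code_of_del hbd h3.symm e4, code_of_del hbd h4.symm e3,
        show ((1 : ℤ) : ZMod 4) = 1 from by decide]
      ring
    · rw [code_of_del hbd h1 e1, show ((-1 : ℤ) : ZMod 4) = 3 from by decide]


variable (A B)

noncomputable def pstep (v : Pt d) : Pt d :=
  if hv : v = 0 then 0 else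
    v - Pi.single (Classical.choose (Function.ne_iff.mp hv))
      (if 0 < v (Classical.choose (Function.ne_iff.mp hv)) then (1 : ℤ) else -1)

lemma pstep_spec {v : Pt d} (hv : v ≠ 0) :
    ∃ i s, pstep v = v - Pi.single i s ∧ v i ≠ 0 ∧
      ((0 < v i ∧ s = 1) ∨ (v i < 0 ∧ s = -1)) := by
  have hi := Classical.choose_spec (Function.ne_iff.mp hv)
  refine ⟨Classical.choose (Function.ne_iff.mp hv),
    (if 0 < v (Classical.choose (Function.ne_iff.mp hv)) then (1 : ℤ) else -1), ?_, ?_, ?_⟩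
  · rw [pstep, dif_neg hv]
  · simpa using hi
  · simp only [Pi.zero_apply] at hi
    split_ifs with h
    · exact Or.inl ⟨h, rfl⟩
    · exact Or.inr ⟨by omega, rfl⟩

lemma sub_single_apply (v : Pt d) (i : Fin d) (s : ℤ) (k : Fin d) :
    (v - (Pi.single i s : Pt d)) k = v k - (if k = i then s else 0) := by
  by_cases hk : k = i
  · subst hk; simp
  · simp [Pi.single_eq_of_ne hk, hk]

lemma nrm_pstep {v : Pt d} (hv : v ≠ 0) : nrm (pstep v) + 1 = nrm v := by
  obtain ⟨i, s, heq, hne, hsgn⟩ := pstep_spec hv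
  have hagree : ∀ k, k ≠ i → (pstep v) k = v k := by
    intro k hk; rw [heq, sub_single_apply]; simp [hk]
  have h1 := nrm_agree i hagree
  have h2 : (pstep v) i = v i - s := by rw [heq, sub_single_apply]; simp
  have : ((pstep v) i).natAbs + 1 = (v i).natAbs := by rw [h2]; omega
  omega

lemma adj_pstep {v : Pt d} (hv : v ≠ 0) : (latticeGraph d).Adj (pstep v) v := by
  obtain ⟨i, s, heq, hne, hsgn⟩ := pstep_spec hv
  have hv2 : v = pstep v + Pi.single i s := by
    rw [heq, sub_add_cancel]
  nth_rewrite 2 [hv2]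
  exact adj_step _ i s (by omega)

noncomputable def hgt (v : Pt d) : ℤ :=
  if hv : v = 0 then 0 else hgt (pstep v) + del A B (pstep v) v
termination_by nrm v
decreasing_by
  have := nrm_pstep hv
  omega

lemma hgt_zero : hgt A B 0 = 0 := by rw [hgt, dif_pos rfl]

lemma hgt_ne {v : Pt d} (hv : v ≠ 0) :
    hgt A B v = hgt A B (pstep v) + del A B (pstep v) v := by
  rw [hgt, dif_neg hv]

variable {A B}

lemma nrm_eq_zero {v : Pt d} : nrm v = 0 ↔ v = 0 := by
  constructor
  · intro h
    funext i
    have := Finset.sum_eq_zero_iff.mp h i (Finset.mem_univ i)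
    simp only [Pi.zero_apply]; omega
  · intro h; subst h; simp [nrm]

lemma adj_nrm {v w : Pt d} (h : (latticeGraph d).Adj v w) :
    nrm w = nrm v + 1 ∨ nrm v = nrm w + 1 := by
  obtain ⟨i, h1, h2⟩ := adj_iff.mp h
  have := nrm_agree i (fun k hk => (h2 k hk).symm)
  omega

lemma hgt_adj_aux (hbd : BoundaryDisjoint d A B) :
    ∀ N v w, nrm v + nrm w ≤ N → nrm w = nrm v + 1 → (latticeGraph d).Adj v w →
      hgt A B w - hgt A B v = del A B v w := by
  intro N
  induction N with
  | zero => intro v w hle hnm _; omega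
  | succ N ih =>
    intro v w hle hnm hadj
    have hw0 : w ≠ 0 := by
      intro h; subst h; rw [nrm_eq_zero.mpr rfl] at hnm; omega
    obtain ⟨j, s, heq, hne, hsgn⟩ := pstep_spec hw0
    obtain ⟨i, hdiff, hoff⟩ := adj_iff.mp hadj
    have hnmi : (w i).natAbs = (v i).natAbs + 1 := by
      have := nrm_agree i (fun k hk => (hoff k hk).symm)
      omega
    by_cases hji : j = i
    · subst hji
      have hpv : pstep w = v := by
        funext k
        rw [heq, sub_single_apply]
        by_cases hk : k = j
        · rw [if_pos hk, hk]
          rcases hsgn with ⟨hp, hs⟩ | ⟨hp, hs⟩ <;> subst hs <;> omega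
        · rw [hoff k hk]; simp [hk]
      rw [hgt_ne A B hw0, hpv]
      ring
    · have hvj : v j = w j := (hoff j hji).symm
      have hv0 : v ≠ 0 := by
        intro h; subst h; simp only [Pi.zero_apply] at hvj; omega
      set v' : Pt d := v - Pi.single j s with hv'
      have hv'j : v' j = v j - s := by rw [hv', sub_single_apply]; simp
      have hv'off : ∀ k, k ≠ j → v' k = v k := by
        intro k hk; rw [hv', sub_single_apply]; simp [hk]
      have hnv' : nrm v' + 1 = nrm v := by
        have h1 := nrm_agree j hv'off
        have : (v' j).natAbs + 1 = (v j).natAbs := by rw [hv'j]; omega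
        omega
      have hnpw : nrm (pstep w) + 1 = nrm w := nrm_pstep hw0
      have hpwj : (pstep w) j = w j - s := by rw [heq, sub_single_apply]; simp
      have hpwoff : ∀ k, k ≠ j → (pstep w) k = w k := by
        intro k hk; rw [heq, sub_single_apply]; simp [hk]
      have hadj1 : (latticeGraph d).Adj v' v := by
        have hv2 : v = v' + Pi.single j s := by
          rw [hv', sub_add_cancel]
        rw [hv2]
        exact adj_step _ j s (by omega)
      have hadj2 : (latticeGraph d).Adj v' (pstep w) := by
        rw [adj_iff]
        refine ⟨i, ?_, ?_⟩
        · rw [hpwoff i (fun h => hji h.symm), hv'off i (fun h => hji h.symm)]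
          omega
        · intro k hk
          by_cases hkj : k = j
          · subst hkj; rw [hpwj, hv'j, hvj]
          · rw [hpwoff k hkj, hv'off k hkj]
            exact hoff k hk
      have hAdjW : (latticeGraph d).Adj w (pstep w) := (adj_pstep hw0).symm
      have hne1 : v' ≠ w := by
        intro h
        have := congrFun h i
        rw [hv'off i (fun hh => hji hh.symm)] at this
        omega
      have hne2 : v ≠ pstep w := by
        intro h
        have := congrFun h j
        rw [hpwj, ← hvj] at this
        omega
      have ih1 : hgt A B v - hgt A B v' = del A B v' v :=
        ih v' v (by omega) (by omega) hadj1
      have ih2 : hgt A B (pstep w) - hgt A B v' = del A B v' (pstep w) :=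
        ih v' (pstep w) (by omega) (by omega) hadj2
      have hw : hgt A B w = hgt A B (pstep w) + del A B (pstep w) w := hgt_ne A B hw0
      have hsq : del A B v' v + del A B v w = del A B v' (pstep w) + del A B (pstep w) w :=
        squareEq hbd hadj1 hadj hAdjW hadj2.symm hne1 hne2
      omega

lemma hgt_adj (hbd : BoundaryDisjoint d A B) {v w : Pt d}
    (hadj : (latticeGraph d).Adj v w) :
    hgt A B w - hgt A B v = del A B v w := by
  rcases adj_nrm hadj with h | h
  · exact hgt_adj_aux hbd (nrm v + nrm w) v w le_rfl h hadj
  · have := hgt_adj_aux hbd (nrm w + nrm v) w v le_rfl h hadj.symm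
    rw [del_antisymm]
    omega

lemma hgt_cast (hbd : BoundaryDisjoint d A B) (v : Pt d) :
    ((hgt A B v : ℤ) : ZMod 4) = code A B v - code A B 0 := by
  have key : ∀ N (u : Pt d), nrm u ≤ N → ((hgt A B u : ℤ) : ZMod 4) = code A B u - code A B 0 := by
    intro N
    induction N with
    | zero =>
      intro u hu
      have : u = 0 := nrm_eq_zero.mp (by omega)
      subst this
      rw [hgt_zero]
      simp
    | succ N ih =>
      intro u hu
      by_cases hu0 : u = 0
      · subst hu0; rw [hgt_zero]; simp
      · have hnp := nrm_pstep hu0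
        have ihp := ih (pstep u) (by omega)
        rw [hgt_ne A B hu0]
        push_cast
        rw [ihp, del_cast hbd (adj_pstep hu0)]
        ring
  exact key (nrm v) v le_rfl


lemma pin0 {x : ℤ} (h1 : -1 ≤ x) (h2 : x ≤ 1) (h : (x : ZMod 4) = 0) : x = 0 := by
  interval_cases x <;> first | rfl | (exfalso; revert h; decide)

lemma pin1 {x : ℤ} (h1 : -1 ≤ x) (h2 : x ≤ 1) (h : (x : ZMod 4) = 1) : x = 1 := by
  interval_cases x <;> first | rfl | (exfalso; revert h; decide)

lemma pin3 {x : ℤ} (h1 : -1 ≤ x) (h2 : x ≤ 1) (h : (x : ZMod 4) = 3) : x = -1 := by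
  interval_cases x <;> first | rfl | (exfalso; revert h; decide)

lemma tp1_ne (t : ZMod 4) : t + 1 ≠ t := by
  intro h
  have h1 : (1 : ZMod 4) = 0 := by linear_combination h
  exact absurd h1 (by decide)

lemma sub_tp1 (t : ZMod 4) : t - (t + 1) = 3 := by
  have h4 : (4 : ZMod 4) = 0 := by decide
  linear_combination -h4

lemma window_edge (hbd : BoundaryDisjoint d A B) {t : ZMod 4} {u v : Pt d}
    (hadj : (latticeGraph d).Adj u v)
    (hcu : code A B u = t ∨ code A B u = t + 1)
    (hcv : code A B v = t ∨ code A B v = t + 1) :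
    hgt A B v - (if code A B v = t then (0 : ℤ) else 1)
      = hgt A B u - (if code A B u = t then (0 : ℤ) else 1) := by
  have hd := hgt_adj hbd hadj
  have hc := del_cast hbd hadj
  have hb := del_bounds (A := A) (B := B) u v
  rcases hcu with hcu | hcu <;> rcases hcv with hcv | hcv
  · have hdel : del A B u v = 0 := by
      apply pin0 hb.1 hb.2
      rw [hc, hcu, hcv]; ring
    rw [if_pos hcu, if_pos hcv]; omega
  · have hdel : del A B u v = 1 := by
      apply pin1 hb.1 hb.2
      rw [hc, hcu, hcv]; ring
    rw [if_pos hcu, if_neg (by rw [hcv]; exact tp1_ne t)]; omega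
  · have hdel : del A B u v = -1 := by
      apply pin3 hb.1 hb.2
      rw [hc, hcu, hcv]
      exact sub_tp1 t
    rw [if_pos hcv, if_neg (by rw [hcu]; exact tp1_ne t)]; omega
  · have hdel : del A B u v = 0 := by
      apply pin0 hb.1 hb.2
      rw [hc, hcu, hcv]; ring
    rw [if_neg (by rw [hcv]; exact tp1_ne t), if_neg (by rw [hcu]; exact tp1_ne t)]; omega

lemma window (hbd : BoundaryDisjoint d A B) {S : Set (Pt d)} {t : ZMod 4}
    (hS : ∀ s ∈ S, code A B s = t ∨ code A B s = t + 1)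
    (hconn : ConnectedIn (latticeGraph d) S)
    {x y : Pt d} (hx : x ∈ S) (hy : y ∈ S) :
    -1 ≤ hgt A B y - hgt A B x ∧ hgt A B y - hgt A B x ≤ 1 := by
  have main : ∀ (x' y' : {z // z ∈ S}) (p : ((latticeGraph d).induce S).Walk x' y'),
      hgt A B ↑y' - (if code A B ↑y' = t then (0 : ℤ) else 1)
        = hgt A B ↑x' - (if code A B ↑x' = t then (0 : ℤ) else 1) := by
    intro x' y' p
    induction p with
    | nil => rfl
    | @cons a b c ha p ih =>
      rw [ih]
      exact window_edge hbd ha (hS ↑a a.2) (hS ↑b b.2)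
  obtain ⟨p⟩ := hconn.preconnected ⟨x, hx⟩ ⟨y, hy⟩
  have he := main ⟨x, hx⟩ ⟨y, hy⟩ p
  simp only at he
  constructor <;> split_ifs at he <;> omega

lemma crossing (hbd : BoundaryDisjoint d A B)
    (hA : ConnectedIn (latticeGraph d) A) (hA' : ConnectedIn (latticeGraph d) Aᶜ)
    (hB : ConnectedIn (latticeGraph d) B) (hB' : ConnectedIn (latticeGraph d) Bᶜ)
    (h11 : (A ∩ B).Nonempty) (h10 : (A ∩ Bᶜ).Nonempty) (h01 : (Aᶜ ∩ B).Nonempty)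
    (h00 : (Aᶜ ∩ Bᶜ).Nonempty) : False := by
  obtain ⟨w, hwA, hwB⟩ := h11
  obtain ⟨p, hpA, hpB⟩ := h10
  obtain ⟨q, hqA, hqB⟩ := h01
  obtain ⟨o, hoA, hoB⟩ := h00
  have cw : code A B w = 2 := code_eq_two.mpr ⟨hwA, hwB⟩
  have cp : code A B p = 3 := code_eq_three.mpr ⟨hpA, hpB⟩
  have cq : code A B q = 1 := code_eq_one.mpr ⟨hqA, hqB⟩
  have co : code A B o = 0 := code_eq_zero.mpr ⟨hoA, hoB⟩
  have hSA : ∀ s ∈ A, code A B s = 2 ∨ code A B s = 2 + 1 := by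
    intro s hs
    by_cases hsB : s ∈ B
    · exact Or.inl (code_eq_two.mpr ⟨hs, hsB⟩)
    · right
      rw [show (2 : ZMod 4) + 1 = 3 from by decide]
      exact code_eq_three.mpr ⟨hs, hsB⟩
  have hSB : ∀ s ∈ B, code A B s = 1 ∨ code A B s = 1 + 1 := by
    intro s hs
    by_cases hsA : s ∈ A
    · right
      rw [show (1 : ZMod 4) + 1 = 2 from by decide]
      exact code_eq_two.mpr ⟨hsA, hs⟩
    · exact Or.inl (code_eq_one.mpr ⟨hsA, hs⟩)
  have hSA' : ∀ s ∈ Aᶜ, code A B s = 0 ∨ code A B s = 0 + 1 := by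
    intro s hs
    by_cases hsB : s ∈ B
    · right
      rw [show (0 : ZMod 4) + 1 = 1 from by decide]
      exact code_eq_one.mpr ⟨hs, hsB⟩
    · exact Or.inl (code_eq_zero.mpr ⟨hs, hsB⟩)
  have hSB' : ∀ s ∈ Bᶜ, code A B s = 3 ∨ code A B s = 3 + 1 := by
    intro s hs
    by_cases hsA : s ∈ A
    · exact Or.inl (code_eq_three.mpr ⟨hsA, hs⟩)
    · right
      rw [show (3 : ZMod 4) + 1 = 0 from by decide]
      exact code_eq_zero.mpr ⟨hsA, hs⟩
  have W1 := window hbd hSA hA hwA hpA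
  have W2 := window hbd hSB' hB' hpB hoB
  have W3 := window hbd hSA' hA' hoA hqA
  have W4 := window hbd hSB hB hqB hwB
  have cast_diff : ∀ u v : Pt d, ((hgt A B v - hgt A B u : ℤ) : ZMod 4)
      = code A B v - code A B u := by
    intro u v
    push_cast
    rw [hgt_cast hbd, hgt_cast hbd]
    ring
  have E1 : hgt A B p - hgt A B w = 1 := by
    apply pin1 W1.1 W1.2
    rw [cast_diff, cp, cw]; decide
  have E2 : hgt A B o - hgt A B p = 1 := by
    apply pin1 W2.1 W2.2
    rw [cast_diff, co, cp]; decide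
  have E3 : hgt A B q - hgt A B o = 1 := by
    apply pin1 W3.1 W3.2
    rw [cast_diff, cq, co]; decide
  have E4 : hgt A B w - hgt A B q = 1 := by
    apply pin1 W4.1 W4.2
    rw [cast_diff, cw, cq]; decide
  omega

end Code


lemma periodic_iterate {S : Set (Pt d)} {z : Pt d} (h : τ z S = S) :
    ∀ k : ℕ, τ ((k : ℤ) • z) S = S := by
  intro k
  induction k with
  | zero => simp [τ_zero]
  | succ k ih =>
    have : ((k + 1 : ℕ) : ℤ) • z = (k : ℤ) • z + z := by push_cast; rw [add_smul, one_smul]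
    rw [this, ← τ_τ, h, ih]

lemma τ_congr {S : Set (Pt d)} {c c' : Pt d} (h : τ c S = τ c' S) (e : Pt d) :
    τ e S = τ (e + (c' - c)) S := by
  have h1 : τ e S = τ (e - c) (τ c S) := by rw [τ_τ, sub_add_cancel]
  rw [h1, h, τ_τ]
  congr 1
  abel

lemma chain_cover {G W : Set (Pt d)} {z : Pt d} (hne : G.Nonempty)
    (hsub : G ⊆ τ z G)
    (hbd : ∀ k : ℕ, edgeBdry d (τ ((k : ℤ) • z) G) ∩ edgeBdry d (τ (((k : ℤ) + 1) • z) G) = ∅)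
    (hW : ∀ k : ℕ, τ ((k : ℤ) • z) G ⊆ W) : W = Set.univ := by
  have hstep : ∀ k : ℕ, (vplus d)^[k] G ⊆ τ ((k : ℤ) • z) G := by
    intro k
    induction k with
    | zero => simpa [τ_zero] using Set.Subset.rfl
    | succ k ih =>
      rw [Function.iterate_succ_apply']
      have hsub2 : τ ((k : ℤ) • z) G ⊆ τ (((k : ℤ) + 1) • z) G := by
        have := τ_mono ((k : ℤ) • z) hsub
        rw [τ_τ] at this
        have he : (k : ℤ) • z + z = ((k : ℤ) + 1) • z := by rw [add_smul, one_smul]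
        rwa [he] at this
      have h1 : vplus d ((vplus d)^[k] G) ⊆ vplus d (τ ((k : ℤ) • z) G) := vplus_mono ih
      have h2 : vplus d (τ ((k : ℤ) • z) G) ⊆ τ (((k : ℤ) + 1) • z) G :=
        vplus_subset_of_nested hsub2 (hbd k)
      have he : (((k + 1 : ℕ) : ℤ)) • z = ((k : ℤ) + 1) • z := by push_cast; ring_nf
      rw [he]
      exact h1.trans h2
  obtain ⟨a, ha⟩ := hne
  ext v
  simp only [Set.mem_univ, iff_true]
  exact hW _ (hstep _ (reach G a ha (∑ i, (v i - a i).natAbs) v rfl))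

lemma translate_mem_translates (n : ℕ) (X : Set (Pt d)) {x : Pt d}
    (hx : ∀ i, (n : ℤ) ∣ x i) : τ x X ∈ translates n d X := ⟨x, hx, rfl⟩

lemma chainT (n : ℕ) {X : Set (Pt d)} (hX : TranslationRespecting n d X)
    {x1 x2 : Pt d} (h1 : ∀ i, (n : ℤ) ∣ x1 i) (h2 : ∀ i, (n : ℤ) ∣ x2 i)
    (hne : τ x1 X ≠ τ x2 X) (hsub : τ x1 X ⊆ τ x2 X) (hXne : X.Nonempty)
    {W : Set (Pt d)} (hWper : τ (x2 - x1) W = W) (hXW : τ x1 X ⊆ W) :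
    W = Set.univ := by
  set z : Pt d := x2 - x1 with hz
  have hzx : z + x1 = x2 := by rw [hz]; abel
  have hdivz : ∀ i, (n : ℤ) ∣ z i := fun i => by
    rw [hz]; exact dvd_sub (h2 i) (h1 i)
  apply chain_cover (G := τ x1 X) (z := z) (hXne.image _)
  · have : τ z (τ x1 X) = τ x2 X := by rw [τ_τ, hzx]
    rw [this]; exact hsub
  · intro k
    have e1 : τ ((k : ℤ) • z) (τ x1 X) = τ ((k : ℤ) • z + x1) X := τ_τ _ _ _
    have e2 : τ (((k : ℤ) + 1) • z) (τ x1 X) = τ (((k : ℤ) + 1) • z + x1) X := τ_τ _ _ _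
    have hdiv1 : ∀ i, (n : ℤ) ∣ ((k : ℤ) • z + x1) i := fun i => by
      simp only [Pi.add_apply, Pi.smul_apply, smul_eq_mul]
      exact dvd_add (Dvd.dvd.mul_left (hdivz i) _) (h1 i)
    have hdiv2 : ∀ i, (n : ℤ) ∣ (((k : ℤ) + 1) • z + x1) i := fun i => by
      simp only [Pi.add_apply, Pi.smul_apply, smul_eq_mul]
      exact dvd_add (Dvd.dvd.mul_left (hdivz i) _) (h1 i)
    have hnepair : τ ((k : ℤ) • z + x1) X ≠ τ (((k : ℤ) + 1) • z + x1) X := by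
      intro h
      have hd : (((k : ℤ) + 1) • z + x1) - ((k : ℤ) • z + x1) = z := by
        rw [add_smul, one_smul]; abel
      have := τ_congr h x1
      rw [hd, add_comm x1 z, hzx] at this
      exact hne this
    have hbd := hX.2 _ (translate_mem_translates n X hdiv1) _
      (translate_mem_translates n X hdiv2) hnepair
    rw [e1, e2]
    exact hbd.1
  · intro k
    have e1 : τ ((k : ℤ) • z) (τ x1 X) ⊆ τ ((k : ℤ) • z) W := τ_mono _ hXW
    rwa [periodic_iterate hWper k] at e1

lemma chainC (n : ℕ) {X : Set (Pt d)} (hX : TranslationRespecting n d X)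
    {x1 x2 : Pt d} (h1 : ∀ i, (n : ℤ) ∣ x1 i) (h2 : ∀ i, (n : ℤ) ∣ x2 i)
    (hne : τ x1 X ≠ τ x2 X) (hsub : τ x1 X ⊆ τ x2 X) (hXcne : Xᶜ.Nonempty)
    {W : Set (Pt d)} (hWper : τ (x1 - x2) W = W) (hXW : (τ x2 X)ᶜ ⊆ W) :
    W = Set.univ := by
  set z : Pt d := x1 - x2 with hz
  have hzx : z + x2 = x1 := by rw [hz]; abel
  have hdivz : ∀ i, (n : ℤ) ∣ z i := fun i => by
    rw [hz]; exact dvd_sub (h1 i) (h2 i)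
  apply chain_cover (G := (τ x2 X)ᶜ) (z := z)
  · rw [τ_compl]; exact (hXcne.image _)
  · have e1 : τ z ((τ x2 X)ᶜ) = (τ x1 X)ᶜ := by
      rw [τ_compl, τ_τ, hzx, ← τ_compl]
    rw [e1]
    exact Set.compl_subset_compl.mpr hsub
  · intro k
    have e1 : τ ((k : ℤ) • z) ((τ x2 X)ᶜ) = (τ ((k : ℤ) • z + x2) X)ᶜ := by
      rw [τ_compl, τ_τ, ← τ_compl]
    have e2 : τ (((k : ℤ) + 1) • z) ((τ x2 X)ᶜ) = (τ (((k : ℤ) + 1) • z + x2) X)ᶜ := by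
      rw [τ_compl, τ_τ, ← τ_compl]
    have hdiv1 : ∀ i, (n : ℤ) ∣ ((k : ℤ) • z + x2) i := fun i => by
      simp only [Pi.add_apply, Pi.smul_apply, smul_eq_mul]
      exact dvd_add (Dvd.dvd.mul_left (hdivz i) _) (h2 i)
    have hdiv2 : ∀ i, (n : ℤ) ∣ (((k : ℤ) + 1) • z + x2) i := fun i => by
      simp only [Pi.add_apply, Pi.smul_apply, smul_eq_mul]
      exact dvd_add (Dvd.dvd.mul_left (hdivz i) _) (h2 i)
    have hnepair : τ ((k : ℤ) • z + x2) X ≠ τ (((k : ℤ) + 1) • z + x2) X := by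
      intro h
      have hd : (((k : ℤ) + 1) • z + x2) - ((k : ℤ) • z + x2) = z := by
        rw [add_smul, one_smul]; abel
      have := τ_congr h x2
      rw [hd, add_comm x2 z, hzx] at this
      exact hne this.symm
    have hbd := hX.2 _ (translate_mem_translates n X hdiv1) _
      (translate_mem_translates n X hdiv2) hnepair
    rw [e1, e2, edgeBdry_compl, edgeBdry_compl]
    exact hbd.1
  · intro k
    have e1 : τ ((k : ℤ) • z) ((τ x2 X)ᶜ) ⊆ τ ((k : ℤ) • z) W := τ_mono _ hXW
    rwa [periodic_iterate hWper k] at e1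


lemma connectedIn_τ_compl {S : Set (Pt d)} (x : Pt d)
    (h : ConnectedIn (latticeGraph d) Sᶜ) :
    ConnectedIn (latticeGraph d) ((τ x S)ᶜ) := by
  rw [τ_compl]
  exact connectedIn_τ x h

lemma parta (n : ℕ) (U V : Set (Pt d))
    (hU : TranslationRespecting n d U) (hV : TranslationRespecting n d V)
    (hUV : U ⊆ V)
    (hco : ∀ U1 ∈ translates n d U, ∀ U2 ∈ translates n d U, U1 ≠ U2 → U1ᶜ ∩ U2ᶜ = ∅) :
    ∀ V1 ∈ translates n d V, ∀ V2 ∈ translates n d V, V1 ≠ V2 → V1ᶜ ∩ V2ᶜ = ∅ := by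
  intro V1 hV1 V2 hV2 hne12
  obtain ⟨x1, hd1, rfl⟩ := hV1
  obtain ⟨x2, hd2, rfl⟩ := hV2
  show (τ x1 V)ᶜ ∩ (τ x2 V)ᶜ = ∅
  replace hne12 : τ x1 V ≠ τ x2 V := hne12
  have hUne : U.Nonempty := Set.nonempty_iff_ne_empty.mpr hU.1.1
  have hVcne : Vᶜ.Nonempty := Set.nonempty_compl.mpr hV.1.2.1
  by_cases hUeq : τ x1 U = τ x2 U
  · rcases Set.eq_empty_or_nonempty ((τ x1 V)ᶜ ∩ (τ x2 V)ᶜ) with hcc | hcc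
    · exact hcc
    exfalso
    rcases Set.eq_empty_or_nonempty (τ x1 V ∩ (τ x2 V)ᶜ) with h10 | h10
    · have hsub : τ x1 V ⊆ τ x2 V := by
        intro v hv
        by_contra hb
        exact Set.eq_empty_iff_forall_notMem.mp h10 v ⟨hv, hb⟩
      have hWper : τ (x1 - x2) ((τ x2 U)ᶜ) = (τ x2 U)ᶜ := by
        rw [τ_compl, τ_τ, sub_add_cancel, ← τ_compl, ← τ_compl, hUeq]
      have hXW : (τ x2 V)ᶜ ⊆ (τ x2 U)ᶜ := Set.compl_subset_compl.mpr (τ_mono _ hUV)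
      have huniv := chainC n hV hd1 hd2 hne12 hsub hVcne hWper hXW
      have hempty : τ x2 U = ∅ := by
        rw [← compl_compl (τ x2 U), huniv, Set.compl_univ]
      exact hU.1.1 (τ_eq_empty hempty)
    rcases Set.eq_empty_or_nonempty ((τ x1 V)ᶜ ∩ τ x2 V) with h01 | h01
    · have hsub : τ x2 V ⊆ τ x1 V := by
        intro v hv
        by_contra hb
        exact Set.eq_empty_iff_forall_notMem.mp h01 v ⟨hb, hv⟩
      have hWper : τ (x2 - x1) ((τ x1 U)ᶜ) = (τ x1 U)ᶜ := by
        rw [τ_compl, τ_τ, sub_add_cancel, ← τ_compl, ← τ_compl, hUeq]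
      have hXW : (τ x1 V)ᶜ ⊆ (τ x1 U)ᶜ := Set.compl_subset_compl.mpr (τ_mono _ hUV)
      have huniv := chainC n hV hd2 hd1 hne12.symm hsub hVcne hWper hXW
      have hempty : τ x1 U = ∅ := by
        rw [← compl_compl (τ x1 U), huniv, Set.compl_univ]
      exact hU.1.1 (τ_eq_empty hempty)
    · have h11 : (τ x1 V ∩ τ x2 V).Nonempty := by
        obtain ⟨u, hu⟩ := hUne.image (fun u => u + x1)
        exact ⟨u, τ_mono _ hUV hu, τ_mono _ hUV (hUeq ▸ hu)⟩
      have hbd := hV.2 _ (translate_mem_translates n V hd1) _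
        (translate_mem_translates n V hd2) hne12
      exact crossing hbd (connectedIn_τ x1 hV.1.2.2.1) (connectedIn_τ_compl x1 hV.1.2.2.2)
        (connectedIn_τ x2 hV.1.2.2.1) (connectedIn_τ_compl x2 hV.1.2.2.2)
        h11 h10 h01 hcc
  · have h := hco (τ x1 U) (translate_mem_translates n U hd1) (τ x2 U)
      (translate_mem_translates n U hd2) hUeq
    have hsub : (τ x1 V)ᶜ ∩ (τ x2 V)ᶜ ⊆ (τ x1 U)ᶜ ∩ (τ x2 U)ᶜ :=
      Set.inter_subset_inter (Set.compl_subset_compl.mpr (τ_mono _ hUV))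
        (Set.compl_subset_compl.mpr (τ_mono _ hUV))
    rw [h] at hsub
    exact Set.subset_empty_iff.mp hsub

lemma partb (n : ℕ) (U V : Set (Pt d))
    (hU : TranslationRespecting n d U) (hV : TranslationRespecting n d V)
    (hUV : U ⊆ V)
    (hdisj : ∀ V1 ∈ translates n d V, ∀ V2 ∈ translates n d V, V1 ≠ V2 → V1 ∩ V2 = ∅) :
    ∀ U1 ∈ translates n d U, ∀ U2 ∈ translates n d U, U1 ≠ U2 → U1 ∩ U2 = ∅ := by
  intro U1 hU1 U2 hU2 hne12
  obtain ⟨x1, hd1, rfl⟩ := hU1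
  obtain ⟨x2, hd2, rfl⟩ := hU2
  show τ x1 U ∩ τ x2 U = ∅
  replace hne12 : τ x1 U ≠ τ x2 U := hne12
  have hUne : U.Nonempty := Set.nonempty_iff_ne_empty.mpr hU.1.1
  have hVuniv : V ≠ Set.univ := hV.1.2.1
  by_cases hVeq : τ x1 V = τ x2 V
  · rcases Set.eq_empty_or_nonempty (τ x1 U ∩ τ x2 U) with h11 | h11
    · exact h11
    exfalso
    rcases Set.eq_empty_or_nonempty (τ x1 U ∩ (τ x2 U)ᶜ) with h10 | h10
    · have hsub : τ x1 U ⊆ τ x2 U := by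
        intro v hv
        by_contra hb
        exact Set.eq_empty_iff_forall_notMem.mp h10 v ⟨hv, hb⟩
      have hWper : τ (x2 - x1) (τ x1 V) = τ x1 V := by
        rw [τ_τ, sub_add_cancel, ← hVeq]
      have hXW : τ x1 U ⊆ τ x1 V := τ_mono _ hUV
      have huniv := chainT n hU hd1 hd2 hne12 hsub hUne hWper hXW
      exact hVuniv (τ_eq_univ huniv)
    rcases Set.eq_empty_or_nonempty ((τ x1 U)ᶜ ∩ τ x2 U) with h01 | h01
    · have hsub : τ x2 U ⊆ τ x1 U := by
        intro v hv
        by_contra hb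
        exact Set.eq_empty_iff_forall_notMem.mp h01 v ⟨hb, hv⟩
      have hWper : τ (x1 - x2) (τ x2 V) = τ x2 V := by
        rw [τ_τ, sub_add_cancel, hVeq]
      have hXW : τ x2 U ⊆ τ x2 V := τ_mono _ hUV
      have huniv := chainT n hU hd2 hd1 hne12.symm hsub hUne hWper hXW
      exact hVuniv (τ_eq_univ huniv)
    rcases Set.eq_empty_or_nonempty ((τ x1 U)ᶜ ∩ (τ x2 U)ᶜ) with h00 | h00
    · have huniv : τ x1 V = Set.univ := by
        ext v
        simp only [Set.mem_univ, iff_true]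
        have : v ∈ τ x1 U ∨ v ∈ τ x2 U := by
          by_contra hb
          push_neg at hb
          exact Set.eq_empty_iff_forall_notMem.mp h00 v ⟨hb.1, hb.2⟩
        rcases this with h | h
        · exact τ_mono _ hUV h
        · rw [hVeq]
          exact τ_mono _ hUV h
      exact hVuniv (τ_eq_univ huniv)
    · have hbd := hU.2 _ (translate_mem_translates n U hd1) _
        (translate_mem_translates n U hd2) hne12
      exact crossing hbd (connectedIn_τ x1 hU.1.2.2.1) (connectedIn_τ_compl x1 hU.1.2.2.2)
        (connectedIn_τ x2 hU.1.2.2.1) (connectedIn_τ_compl x2 hU.1.2.2.2)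
        h11 h10 h01 h00
  · have h := hdisj (τ x1 V) (translate_mem_translates n V hd1) (τ x2 V)
      (translate_mem_translates n V hd2) hVeq
    have hsub : τ x1 U ∩ τ x2 U ⊆ τ x1 V ∩ τ x2 V :=
      Set.inter_subset_inter (τ_mono _ hUV) (τ_mono _ hUV)
    rw [h] at hsub
    exact Set.subset_empty_iff.mp hsub

end Aux

theorem stmt11 (n d : ℕ) (hn : 2 ≤ n) (U V : Set (Fin d → ℤ))
    (hU : P3C.TranslationRespecting n d U) (hV : P3C.TranslationRespecting n d V)
    (hUnt : (P3C.translates n d U).Nontrivial) (hVnt : (P3C.translates n d V).Nontrivial)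
    (hUV : U ⊆ V) :
    ((∀ U1 ∈ P3C.translates n d U, ∀ U2 ∈ P3C.translates n d U, U1 ≠ U2 → U1ᶜ ∩ U2ᶜ = ∅) →
      (∀ V1 ∈ P3C.translates n d V, ∀ V2 ∈ P3C.translates n d V, V1 ≠ V2 → V1ᶜ ∩ V2ᶜ = ∅)) ∧
    ((∀ V1 ∈ P3C.translates n d V, ∀ V2 ∈ P3C.translates n d V, V1 ≠ V2 → V1 ∩ V2 = ∅) →
      (∀ U1 ∈ P3C.translates n d U, ∀ U2 ∈ P3C.translates n d U, U1 ≠ U2 → U1 ∩ U2 = ∅)) :=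
  ⟨Aux.parta n U V hU hV hUV, Aux.partb n U V hU hV hUV⟩
end

section
/- Let n ≥ 2 be an integer and let U ⊆ ℤ^d be translation respecting of type 0 (i.e. |T_U| > 1 and T_U is totally ordered by inclusion). Then: (a) the union of all members of T_U equals ℤ^d; (b) there exists 1 ≤ i ≤ d such that for every v ∈ ℤ^d the line {v + k·e_i : k ∈ ℤ} intersects both U and U^c; (c) if U + n·e_1 ≠ U then for every v ∈ ℤ^d the line {v + k·e_1 : k ∈ ℤ} intersects both U and U^c. -/
namespace P3CAux
open P3C

variable {n d : ℕ}

def T (d : ℕ) (U : Set (Fin d → ℤ)) (y : Fin d → ℤ) : Set (Fin d → ℤ) :=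
  (fun u => u + y) '' U

lemma mem_T {U : Set (Fin d → ℤ)} {y v : Fin d → ℤ} : v ∈ T d U y ↔ v - y ∈ U := by
  constructor
  · rintro ⟨u, hu, rfl⟩; simpa using hu
  · intro h; exact ⟨v - y, h, by simp⟩

lemma T_zero (U : Set (Fin d → ℤ)) : T d U 0 = U := by
  ext v; simp [mem_T]

lemma T_img (U : Set (Fin d → ℤ)) (y z : Fin d → ℤ) :
    (fun u => u + z) '' T d U y = T d U (y + z) := by
  unfold T
  rw [Set.image_image]
  simp only [add_assoc]

lemma T_inj {A B : Set (Fin d → ℤ)} (z : Fin d → ℤ)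
    (h : (fun u => u + z) '' A = (fun u => u + z) '' B) : A = B :=
  Set.image_injective.mpr (add_left_injective z) h

lemma single_add (i : Fin d) (a b : ℤ) :
    (Pi.single i a : Fin d → ℤ) + Pi.single i b = Pi.single i (a + b) := by
  funext j; by_cases h : j = i <;> simp [Pi.single_apply, h]

lemma single_dvd (i : Fin d) (a : ℤ) (h : (n:ℤ) ∣ a) (j : Fin d) :
    (n:ℤ) ∣ (Pi.single i a : Fin d → ℤ) j := by
  by_cases hj : j = i <;> simp [Pi.single_apply, hj, h]

lemma frontier_edge (W : Set (Fin d → ℤ)) (hne : W.Nonempty) (hnu : W ≠ Set.univ) :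
    ∃ a b, (latticeGraph d).Adj a b ∧ a ∈ W ∧ b ∉ W := by
  obtain ⟨b0, hb0⟩ : ∃ b0, b0 ∉ W := by
    by_contra h; push_neg at h; exact hnu (Set.eq_univ_of_forall h)
  obtain ⟨a0, ha0⟩ := hne
  suffices H : ∀ N a0, (∑ i, (a0 i - b0 i).natAbs) = N → a0 ∈ W →
      ∃ a b, (latticeGraph d).Adj a b ∧ a ∈ W ∧ b ∉ W from H _ a0 rfl ha0
  intro N
  induction N using Nat.strong_induction_on with
  | _ N ih =>
    intro a hNa ha
    have hab : a ≠ b0 := fun h => hb0 (h ▸ ha)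
    obtain ⟨i, hi⟩ := Function.ne_iff.mp hab
    set s : ℤ := if a i < b0 i then 1 else -1 with hs
    set a1 : Fin d → ℤ := Function.update a i (a i + s) with ha1
    have hadj : (latticeGraph d).Adj a a1 := by
      refine ⟨i, ?_, fun j hj => Function.update_of_ne hj _ _⟩
      rw [ha1, Function.update_self]
      rcases ite_eq_or_eq (a i < b0 i) (1:ℤ) (-1) with h | h <;> rw [hs, h] <;> omega
    by_cases h1 : a1 ∈ W
    · have hsum : (∑ j, (a1 j - b0 j).natAbs) = N - 1 ∧ 1 ≤ N := by
        have key : ∀ j, j ≠ i → (a1 j - b0 j).natAbs = (a j - b0 j).natAbs := by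
          intro j hj; rw [ha1, Function.update_of_ne hj]
        have e1 : (∑ j, (a1 j - b0 j).natAbs)
            = (a1 i - b0 i).natAbs + ∑ j ∈ Finset.univ.erase i, (a1 j - b0 j).natAbs := by
          exact (Finset.add_sum_erase _ _ (Finset.mem_univ i)).symm
        have e2 : (∑ j, (a j - b0 j).natAbs)
            = (a i - b0 i).natAbs + ∑ j ∈ Finset.univ.erase i, (a j - b0 j).natAbs := by
          exact (Finset.add_sum_erase _ _ (Finset.mem_univ i)).symm
        have e3 : ∑ j ∈ Finset.univ.erase i, (a1 j - b0 j).natAbs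
            = ∑ j ∈ Finset.univ.erase i, (a j - b0 j).natAbs :=
          Finset.sum_congr rfl fun j hj => key j (Finset.ne_of_mem_erase hj)
        have e4 : (a1 i - b0 i).natAbs + 1 = (a i - b0 i).natAbs := by
          rw [ha1, Function.update_self]
          rcases ite_eq_or_eq (a i < b0 i) (1:ℤ) (-1) with h | h <;> rw [hs, h] <;> omega
        omega
      obtain ⟨hsum1, hN1⟩ := hsum
      exact ih (N-1) (by omega) a1 hsum1 h1
    · exact ⟨a, a1, hadj, ha, h1⟩

variable {U : Set (Fin d → ℤ)}

lemma bdry_app (hU : TypeZero n d U) {y y' : Fin d → ℤ}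
    (hy : ∀ j, (n:ℤ) ∣ y j) (hy' : ∀ j, (n:ℤ) ∣ y' j) (hne : T d U y ≠ T d U y')
    {a b : Fin d → ℤ} (hab : (latticeGraph d).Adj a b)
    (h1 : (a ∈ T d U y ∧ b ∉ T d U y) ∨ (b ∈ T d U y ∧ a ∉ T d U y))
    (h2 : (a ∈ T d U y' ∧ b ∉ T d U y') ∨ (b ∈ T d U y' ∧ a ∉ T d U y')) : False := by
  have hbd := hU.1.2 (T d U y) ⟨y, hy, rfl⟩ (T d U y') ⟨y', hy', rfl⟩ hne
  have hmem : (a, b) ∈ edgeBdry d (T d U y) ∩ edgeBdry d (T d U y') :=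
    ⟨⟨hab, h1⟩, ⟨hab, h2⟩⟩
  rw [hbd.1] at hmem
  exact hmem

lemma dist_consec (i : Fin d) (e : ℤ) (hne : T d U (Pi.single i e) ≠ U) (m : ℤ) :
    T d U (Pi.single i (m * e)) ≠ T d U (Pi.single i ((m - 1) * e)) := by
  intro heq
  apply hne
  have h2 := congrArg (Set.image (fun u => u + (Pi.single i ((1 - m) * e) : Fin d → ℤ))) heq
  rw [T_img, T_img, single_add, single_add] at h2
  have hm1 : m * e + (1 - m) * e = e := by ring
  have hm2 : (m - 1) * e + (1 - m) * e = 0 := by ring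
  rw [hm1, hm2] at h2
  rw [h2]
  rw [show (Pi.single i (0:ℤ) : Fin d → ℤ) = 0 from Pi.single_zero i, T_zero]

lemma mem_T_step (i : Fin d) (e : ℤ) (hmono : ∀ u ∈ U, u + Pi.single i e ∈ U)
    {a : Fin d → ℤ} {m : ℤ} (ha : a ∈ T d U (Pi.single i (m * e))) :
    a ∈ T d U (Pi.single i ((m - 1) * e)) := by
  rw [mem_T] at ha ⊢
  have h2 := hmono _ ha
  have : a - Pi.single i (m * e) + Pi.single i e = a - Pi.single i ((m - 1) * e) := by
    have h3 : (Pi.single i ((m-1) * e) : Fin d → ℤ) + Pi.single i e = Pi.single i (m * e) := by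
      rw [single_add]; ring_nf
    rw [← h3]; abel
  rwa [this] at h2

lemma line_hits (hU : TypeZero n d U) (i : Fin d) (e : ℤ) (hdiv : (n:ℤ) ∣ e)
    (hmono : ∀ u ∈ U, u + Pi.single i e ∈ U)
    (hne : T d U (Pi.single i e) ≠ U) (v : Fin d → ℤ) :
    (∃ k : ℤ, v + Pi.single i k ∈ U) ∧ (∃ k : ℤ, v + Pi.single i k ∈ Uᶜ) := by
  have hUne : U.Nonempty := Set.nonempty_iff_ne_empty.mpr hU.1.1.1
  have hUnu : U ≠ Set.univ := hU.1.1.2.1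
  have hdvd : ∀ (m : ℤ) (j : Fin d), (n:ℤ) ∣ (Pi.single i (m * e) : Fin d → ℤ) j :=
    fun m j => single_dvd i _ (Dvd.dvd.mul_left hdiv m) j
  have hT0 : T d U (Pi.single i ((0:ℤ) * e)) = U := by
    rw [show ((0:ℤ) * e) = 0 by ring, show (Pi.single i (0:ℤ) : Fin d → ℤ) = 0 from
      Pi.single_zero i, T_zero]
  have hmemline : ∀ (w : Fin d → ℤ) (m : ℤ), w ∈ T d U (Pi.single i (m * e)) ↔
      w + Pi.single i (-(m * e)) ∈ U := by
    intro w m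
    rw [mem_T]
    constructor
    · intro h; rwa [show w + Pi.single i (-(m*e)) = w - Pi.single i (m*e) by
        rw [show (Pi.single i (-(m*e)) : Fin d → ℤ) = -(Pi.single i (m*e)) by
          funext j; by_cases hj : j = i <;> simp [Pi.single_apply, hj]]; abel]
    · intro h; rwa [show w - Pi.single i (m*e) = w + Pi.single i (-(m*e)) by
        rw [show (Pi.single i (-(m*e)) : Fin d → ℤ) = -(Pi.single i (m*e)) by
          funext j; by_cases hj : j = i <;> simp [Pi.single_apply, hj]]; abel]
  constructor
  · -- line hits U
    by_contra hc
    push_neg at hc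
    set W : Set (Fin d → ℤ) := {w | ∃ m : ℤ, w ∈ T d U (Pi.single i (m * e))} with hW
    have hWne : W.Nonempty := by
      obtain ⟨u0, hu0⟩ := hUne
      exact ⟨u0, 0, by rw [hT0]; exact hu0⟩
    have hWnu : W ≠ Set.univ := by
      intro h
      have : v ∈ W := h ▸ Set.mem_univ v
      obtain ⟨m, hm⟩ := this
      exact hc _ ((hmemline v m).mp hm)
    obtain ⟨a, b, hab, haW, hbW⟩ := frontier_edge W hWne hWnu
    obtain ⟨m0, hm0⟩ := haW
    have ha' := mem_T_step i e hmono hm0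
    have hbnot : ∀ m : ℤ, b ∉ T d U (Pi.single i (m * e)) := fun m hm => hbW ⟨m, hm⟩
    exact bdry_app hU (hdvd m0) (hdvd (m0 - 1)) (dist_consec i e hne m0) hab
      (Or.inl ⟨hm0, hbnot m0⟩) (Or.inl ⟨ha', hbnot (m0 - 1)⟩)
  · -- line hits Uᶜ
    by_contra hc
    push_neg at hc
    have hc' : ∀ k : ℤ, v + Pi.single i k ∈ U := by
      intro k; have := hc k; simpa using this
    set W : Set (Fin d → ℤ) := {w | ∃ m : ℤ, w ∉ T d U (Pi.single i (m * e))} with hW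
    have hWne : W.Nonempty := by
      obtain ⟨w0, hw0⟩ : ∃ w0, w0 ∉ U := by
        by_contra h; push_neg at h; exact hUnu (Set.eq_univ_of_forall h)
      exact ⟨w0, 0, by rw [hT0]; exact hw0⟩
    have hWnu : W ≠ Set.univ := by
      intro h
      have : v ∈ W := h ▸ Set.mem_univ v
      obtain ⟨m, hm⟩ := this
      exact hm ((hmemline v m).mpr (hc' _))
    obtain ⟨a, b, hab, haW, hbW⟩ := frontier_edge W hWne hWnu
    obtain ⟨m0, hm0⟩ := haW
    have ha' : a ∉ T d U (Pi.single i ((m0 + 1 - 1) * e)) := by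
      rwa [show (m0 + 1 - 1 : ℤ) = m0 by ring]
    have ha'' : a ∉ T d U (Pi.single i ((m0 + 1) * e)) := fun h => ha' (mem_T_step i e hmono h)
    have hbin : ∀ m : ℤ, b ∈ T d U (Pi.single i (m * e)) := by
      intro m; by_contra h; exact hbW ⟨m, h⟩
    have := bdry_app hU (hdvd (m0 + 1)) (hdvd ((m0 + 1) - 1)) (dist_consec i e hne (m0 + 1)) hab
      (Or.inr ⟨hbin (m0 + 1), ha''⟩) (Or.inr ⟨hbin (m0 + 1 - 1), ha'⟩)
    exact this


lemma U_mem_translates (U : Set (Fin d → ℤ)) : U ∈ translates n d U :=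
  ⟨0, fun j => by simp, (T_zero U).symm⟩

lemma T_mem_translates (U : Set (Fin d → ℤ)) {y : Fin d → ℤ} (hy : ∀ j, (n:ℤ) ∣ y j) :
    T d U y ∈ translates n d U := ⟨y, hy, rfl⟩

lemma himg (U : Set (Fin d → ℤ)) {i : Fin d} (h : T d U (Pi.single i (n:ℤ)) = U) :
    (fun u => u + (Pi.single i (n:ℤ) : Fin d → ℤ)) '' U = U := by
  nth_rewrite 1 [← T_zero U]
  rw [T_img, zero_add]
  exact h

lemma exists_mono (hU : TypeZero n d U) (i : Fin d)
    (hne : T d U (Pi.single i (n:ℤ)) ≠ U) :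
    ∃ e : ℤ, (n:ℤ) ∣ e ∧ (∀ u ∈ U, u + Pi.single i e ∈ U) ∧ T d U (Pi.single i e) ≠ U := by
  rcases hU.2.2 U (U_mem_translates U) (T d U (Pi.single i (n:ℤ)))
      (T_mem_translates U (single_dvd i _ dvd_rfl)) with hsub | hsub
  · -- U ⊆ T (single i n), take e = -n
    refine ⟨-(n:ℤ), dvd_neg.mpr dvd_rfl, ?_, ?_⟩
    · intro u hu
      have h2 := mem_T.mp (hsub hu)
      rwa [show u + Pi.single i (-(n:ℤ)) = u - Pi.single i (n:ℤ) by
        rw [show (Pi.single i (-(n:ℤ)) : Fin d → ℤ) = -(Pi.single i (n:ℤ)) by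
          funext j; by_cases hj : j = i <;> simp [Pi.single_apply, hj]]; abel]
    · intro heq
      apply hne
      have h2 := congrArg (Set.image (fun u => u + (Pi.single i (n:ℤ) : Fin d → ℤ))) heq
      rw [T_img, single_add, neg_add_cancel,
        show (Pi.single i (0:ℤ) : Fin d → ℤ) = 0 from Pi.single_zero i, T_zero] at h2
      exact h2.symm
  · -- T (single i n) ⊆ U, take e = n
    exact ⟨(n:ℤ), dvd_rfl, fun u hu => hsub ⟨u, hu, rfl⟩, hne⟩

lemma all_T_eq (hAll : ∀ i : Fin d, T d U (Pi.single i (n:ℤ)) = U) :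
    ∀ y : Fin d → ℤ, (∀ j, (n:ℤ) ∣ y j) → T d U y = U := by
  have step1 : ∀ (i : Fin d) (m : ℤ), T d U (Pi.single i (m * (n:ℤ))) = U := by
    intro i m
    induction m using Int.induction_on with
    | zero => rw [zero_mul, Pi.single_zero, T_zero]
    | succ m hm =>
        rw [show ((m:ℤ)+1) * (n:ℤ) = m * n + n by ring, ← single_add, ← T_img, hm,
          himg U (hAll i)]
    | pred m hm =>
        apply T_inj (Pi.single i (n:ℤ))
        rw [T_img, single_add, show (-(m:ℤ)-1) * (n:ℤ) + (n:ℤ) = -(m:ℤ) * (n:ℤ) by ring, hm,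
          himg U (hAll i)]
  intro y hy
  have hrep : y = ∑ j, Pi.single j (y j) := (Finset.univ_sum_single y).symm
  rw [hrep]
  have H : ∀ s : Finset (Fin d), T d U (∑ j ∈ s, Pi.single j (y j)) = U := by
    intro s
    induction s using Finset.induction_on with
    | empty => rw [Finset.sum_empty, T_zero]
    | @insert a s hns ih =>
        rw [Finset.sum_insert hns, ← T_img]
        obtain ⟨c, hc⟩ := hy a
        rw [hc, mul_comm, step1 a c]
        nth_rewrite 1 [← T_zero U]
        rw [T_img, zero_add]
        exact ih
  exact H Finset.univ

lemma exists_i (hU : TypeZero n d U) : ∃ i, T d U (Pi.single i (n:ℤ)) ≠ U := by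
  by_contra h
  push_neg at h
  obtain ⟨A, hA, B, hB, hABne⟩ := hU.2.1
  obtain ⟨y1, hy1, rfl⟩ := hA
  obtain ⟨y2, hy2, rfl⟩ := hB
  exact hABne (by
    rw [show ((fun u => u + y1) '' U) = T d U y1 from rfl, all_T_eq h y1 hy1,
      show ((fun u => u + y2) '' U) = T d U y2 from rfl, all_T_eq h y2 hy2])

lemma sUnion_eq (hU : TypeZero n d U) (i : Fin d) (e : ℤ) (hdiv : (n:ℤ) ∣ e)
    (hmono : ∀ u ∈ U, u + Pi.single i e ∈ U)
    (hne : T d U (Pi.single i e) ≠ U) : ⋃₀ translates n d U = Set.univ := by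
  by_contra h
  have hUne : U.Nonempty := Set.nonempty_iff_ne_empty.mpr hU.1.1.1
  set W : Set (Fin d → ℤ) := ⋃₀ translates n d U with hWdef
  have hWne : W.Nonempty := by
    obtain ⟨u0, hu0⟩ := hUne
    exact ⟨u0, U, U_mem_translates U, hu0⟩
  obtain ⟨a, b, hab, haW, hbW⟩ := frontier_edge W hWne h
  obtain ⟨V, ⟨y0, hy0, rfl⟩, haV⟩ := haW
  have haV : a ∈ T d U y0 := haV
  have hy0' : ∀ j, (n:ℤ) ∣ (y0 - (Pi.single i e : Fin d → ℤ)) j :=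
    fun j => by simpa using dvd_sub (hy0 j) (single_dvd i e hdiv j)
  have ha' : a ∈ T d U (y0 - Pi.single i e) := by
    rw [mem_T] at haV ⊢
    have h2 := hmono _ haV
    rwa [show a - y0 + Pi.single i e = a - (y0 - Pi.single i e) by abel] at h2
  have hdist : T d U y0 ≠ T d U (y0 - Pi.single i e) := by
    intro heq
    apply hne
    have h2 := congrArg (Set.image (fun u => u + ((Pi.single i e : Fin d → ℤ) - y0))) heq
    rw [T_img, T_img, show y0 + ((Pi.single i e : Fin d → ℤ) - y0) = Pi.single i e by abel,
      show y0 - Pi.single i e + ((Pi.single i e : Fin d → ℤ) - y0) = 0 by abel, T_zero] at h2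
    exact h2
  have hb1 : b ∉ T d U y0 := fun hb => hbW ⟨T d U y0, T_mem_translates U hy0, hb⟩
  have hb2 : b ∉ T d U (y0 - Pi.single i e) :=
    fun hb => hbW ⟨T d U (y0 - Pi.single i e), T_mem_translates U hy0', hb⟩
  exact bdry_app hU hy0 hy0' hdist hab (Or.inl ⟨haV, hb1⟩) (Or.inl ⟨ha', hb2⟩)

end P3CAux

theorem stmt12 (n d : ℕ) (hn : 2 ≤ n) (hd : 0 < d) (U : Set (Fin d → ℤ))
    (hU : P3C.TypeZero n d U) :
    (⋃₀ P3C.translates n d U = Set.univ) ∧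
    (∃ i : Fin d, ∀ v : Fin d → ℤ,
      (∃ k : ℤ, v + Pi.single i k ∈ U) ∧ (∃ k : ℤ, v + Pi.single i k ∈ Uᶜ)) ∧
    ((fun u => u + Pi.single (⟨0, hd⟩ : Fin d) (n : ℤ)) '' U ≠ U →
      ∀ v : Fin d → ℤ,
        (∃ k : ℤ, v + Pi.single (⟨0, hd⟩ : Fin d) k ∈ U) ∧
        (∃ k : ℤ, v + Pi.single (⟨0, hd⟩ : Fin d) k ∈ Uᶜ)) := by
  obtain ⟨i0, hi0⟩ := P3CAux.exists_i hU
  obtain ⟨e, hdiv, hmono, hne⟩ := P3CAux.exists_mono hU i0 hi0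
  refine ⟨P3CAux.sUnion_eq hU i0 e hdiv hmono hne,
    ⟨i0, fun v => P3CAux.line_hits hU i0 e hdiv hmono hne v⟩, ?_⟩
  intro h v
  obtain ⟨e1, hdiv1, hmono1, hne1⟩ := P3CAux.exists_mono hU (⟨0, hd⟩ : Fin d) h
  exact P3CAux.line_hits hU _ e1 hdiv1 hmono1 hne1 v
end
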